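/- arXiv:1710.00979 — 5 statements merged into one kernel-verified Lean document; each statement's English description precedes it below -/
import Mathlib

section
/- Let M be a positive integer and p ∈ [0,1]. Then E[e(𝒮)] = p · Σ_{n=1}^{M} a_n(p) and E[g_M(𝒮)] = (1−p) · Σ_{n=1}^{M} a_n(p), where 𝒮 ∼ S(M,p), g_M(S) denotes the number of gaps of S that are at most M, and a_n(p) = Σ_{A ⊆ {1,…,n−1}, n ∉ ⟨A⟩} p^{|A|}(1−p)^{n−1−|A|}. -/
open Filter Topology
open scoped Classical BigOperators

/-- The set of gaps of a numerical semigroup `S ⊆ ℕ`. -/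
def gapSet (S : AddSubmonoid ℕ) : Set ℕ := {n : ℕ | n ∉ S}

/-- `S` is cofinite if its set of gaps is finite. -/
def IsCofinite (S : AddSubmonoid ℕ) : Prop := (gapSet S).Finite

/-- The minimal generators of `S`: nonzero elements of `S` that are not the
sum of two nonzero elements of `S`. -/
def minGens (S : AddSubmonoid ℕ) : Set ℕ :=
  {s : ℕ | s ∈ S ∧ s ≠ 0 ∧ ¬ ∃ a ∈ S, ∃ b ∈ S, a ≠ 0 ∧ b ≠ 0 ∧ s = a + b}

/-- The embedding dimension `e(S)`: the number of minimal generators of `S`. -/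
noncomputable def embDim (S : AddSubmonoid ℕ) : ℕ := (minGens S).ncard

/-- The genus `g(S)`: the number of gaps of `S` (junk value `0` if `S` is not cofinite). -/
noncomputable def genus (S : AddSubmonoid ℕ) : ℕ := (gapSet S).ncard

/-- The Frobenius number `F(S)`: the largest gap of `S`
(junk value `0` if `S` is not cofinite or `S = ℕ`). -/
noncomputable def frob (S : AddSubmonoid ℕ) : ℕ := sSup (gapSet S)

/-- A cofinite numerical semigroup `S ≠ ℕ` is irreducible if it is maximal with
respect to inclusion among numerical semigroups with Frobenius number `F(S)`. -/
def IsIrred (S : AddSubmonoid ℕ) : Prop :=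
  IsCofinite S ∧ S ≠ ⊤ ∧
    ∀ T : AddSubmonoid ℕ, S ≤ T → frob T = frob S → T = S

/-- The number of gaps of `S` that are at most `M`. -/
noncomputable def gapsUpTo (S : AddSubmonoid ℕ) (M : ℕ) : ℕ :=
  {x : ℕ | x ∉ S ∧ x ≤ M}.ncard

/-- The probability weight of a generating set `B ⊆ {1, …, M}` in the ER-type
model `S(M, p)`. -/
noncomputable def wt (p : ℝ) (M : ℕ) (B : Finset ℕ) : ℝ :=
  p ^ B.card * (1 - p) ^ (M - B.card)

/-- The probability in the ER-type model `S(M, p)` that the random numerical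
semigroup `𝒮 = ⟨𝒜⟩` lies in the event `E`. -/
noncomputable def probEvent (M : ℕ) (p : ℝ) (E : Set (AddSubmonoid ℕ)) : ℝ :=
  ∑ B ∈ (Finset.Icc 1 M).powerset,
    if AddSubmonoid.closure (B : Set ℕ) ∈ E then wt p M B else 0

/-- The expectation in the ER-type model `S(M, p)` of an invariant `X` of the
random numerical semigroup `𝒮 = ⟨𝒜⟩`. -/
noncomputable def expectVal (M : ℕ) (p : ℝ) (X : AddSubmonoid ℕ → ℕ) : ℝ :=
  ∑ B ∈ (Finset.Icc 1 M).powerset,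
    (X (AddSubmonoid.closure (B : Set ℕ)) : ℝ) * wt p M B

/-- `h_{n,i}`: the number of numerical semigroups `T` with `n ∉ T`, embedding
dimension `i`, and all minimal generators strictly less than `n/2`. -/
noncomputable def hvec (n i : ℕ) : ℕ :=
  {T : AddSubmonoid ℕ | n ∉ T ∧ embDim T = i ∧ ∀ a ∈ minGens T, 2 * a < n}.ncard

/-- `a_n(p)`: the probability that `n` is not in the semigroup generated by a
random subset of `{1, …, n-1}` chosen with inclusion probability `p`. -/
noncomputable def anp (n : ℕ) (p : ℝ) : ℝ :=
  ∑ A ∈ (Finset.Icc 1 (n - 1)).powerset,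
    if n ∉ AddSubmonoid.closure (A : Set ℕ) then
      p ^ A.card * (1 - p) ^ (n - 1 - A.card) else 0

-- L0
lemma mem_closure_inter_Iic {s : Set ℕ} {x : ℕ} (hx : x ∈ AddSubmonoid.closure s) :
    x ∈ AddSubmonoid.closure (s ∩ Set.Iic x) := by
  induction hx using AddSubmonoid.closure_induction with
  | mem y hy => exact AddSubmonoid.subset_closure ⟨hy, le_refl y⟩
  | zero => exact zero_mem _
  | add y z hy hz py pz =>
      have h1 : AddSubmonoid.closure (s ∩ Set.Iic y) ≤
          AddSubmonoid.closure (s ∩ Set.Iic (y + z)) :=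
        AddSubmonoid.closure_mono
          (Set.inter_subset_inter_right _ (Set.Iic_subset_Iic.mpr (Nat.le_add_right y z)))
      have h2 : AddSubmonoid.closure (s ∩ Set.Iic z) ≤
          AddSubmonoid.closure (s ∩ Set.Iic (y + z)) :=
        AddSubmonoid.closure_mono
          (Set.inter_subset_inter_right _ (Set.Iic_subset_Iic.mpr (Nat.le_add_left z y)))
      exact add_mem (h1 py) (h2 pz)

-- L1
lemma mem_closure_iff_split {s : Set ℕ} {n : ℕ} :
    n ∈ AddSubmonoid.closure s ↔ n ∈ s ∨ n ∈ AddSubmonoid.closure (s ∩ Set.Iio n) := by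
  constructor
  · intro h
    by_cases hns : n ∈ s
    · exact Or.inl hns
    · right
      have h' := mem_closure_inter_Iic h
      have : s ∩ Set.Iic n = s ∩ Set.Iio n := by
        ext x
        simp only [Set.mem_inter_iff, Set.mem_Iic, Set.mem_Iio]
        constructor
        · rintro ⟨hx, hle⟩
          exact ⟨hx, lt_of_le_of_ne hle (by rintro rfl; exact hns hx)⟩
        · rintro ⟨hx, hlt⟩; exact ⟨hx, hlt.le⟩
      rwa [this] at h'
  · rintro (h | h)
    · exact AddSubmonoid.subset_closure h
    · exact AddSubmonoid.closure_mono Set.inter_subset_left h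

-- L2
lemma minGens_closure_iff {B : Finset ℕ} (hB : ∀ b ∈ B, 0 < b) {n : ℕ} :
    n ∈ minGens (AddSubmonoid.closure (B : Set ℕ)) ↔
      n ∈ B ∧ n ∉ AddSubmonoid.closure ((B : Set ℕ) ∩ Set.Iio n) := by
  constructor
  · rintro ⟨hmem, hne, hnsum⟩
    have hnot : n ∉ AddSubmonoid.closure ((B : Set ℕ) ∩ Set.Iio n) := by
      intro hcon
      obtain ⟨l, hl, hsum⟩ := AddSubmonoid.exists_multiset_of_mem_closure hcon
      have hl0 : l ≠ 0 := by
        rintro rfl; simp at hsum; exact hne hsum.symm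
      obtain ⟨a, ha⟩ := Multiset.exists_mem_of_ne_zero hl0
      have haT := hl a ha
      have hrest : a ::ₘ l.erase a = l := Multiset.cons_erase ha
      have hn : n = a + (l.erase a).sum := by
        rw [← hsum]
        conv_lhs => rw [← hrest]
        rw [Multiset.sum_cons]
      have hamem : a ∈ AddSubmonoid.closure (B : Set ℕ) :=
        AddSubmonoid.subset_closure haT.1
      have hbmem : (l.erase a).sum ∈ AddSubmonoid.closure (B : Set ℕ) :=
        AddSubmonoid.multiset_sum_mem _ _ (fun y hy =>
          AddSubmonoid.subset_closure (hl y (Multiset.mem_of_mem_erase hy)).1)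
      have ha0 : a ≠ 0 := (hB a haT.1).ne'
      have hb0 : (l.erase a).sum ≠ 0 := by
        intro hb
        rw [hb, add_zero] at hn
        exact absurd haT.2 (by rw [← hn]; simp)
      exact hnsum ⟨a, hamem, (l.erase a).sum, hbmem, ha0, hb0, hn⟩
    refine ⟨?_, hnot⟩
    rcases mem_closure_iff_split.mp hmem with h | h
    · exact h
    · exact absurd h hnot
  · rintro ⟨hnB, hncl⟩
    refine ⟨AddSubmonoid.subset_closure hnB, (hB n hnB).ne', ?_⟩
    rintro ⟨a, ha, b, hb, ha0, hb0, rfl⟩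
    apply hncl
    have halt : a < a + b := by omega
    have hblt : b < a + b := by omega
    have ha' : a ∈ AddSubmonoid.closure ((B : Set ℕ) ∩ Set.Iio (a + b)) := by
      refine AddSubmonoid.closure_mono ?_ (mem_closure_inter_Iic ha)
      exact Set.inter_subset_inter_right _ (fun x hx => lt_of_le_of_lt hx halt)
    have hb' : b ∈ AddSubmonoid.closure ((B : Set ℕ) ∩ Set.Iio (a + b)) := by
      refine AddSubmonoid.closure_mono ?_ (mem_closure_inter_Iic hb)
      exact Set.inter_subset_inter_right _ (fun x hx => lt_of_le_of_lt hx hblt)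
    exact add_mem ha' hb'

-- powerset splitting
lemma sum_pow_union (s : Finset ℕ) :
    ∀ t : Finset ℕ, Disjoint s t → ∀ f : Finset ℕ → ℝ,
      ∑ u ∈ (s ∪ t).powerset, f u = ∑ a ∈ s.powerset, ∑ b ∈ t.powerset, f (a ∪ b) := by
  intro t
  induction t using Finset.induction_on with
  | empty => intro _ f; simp
  | @insert x t' hx ih =>
      intro h f
      have hxs : x ∉ s := (Finset.disjoint_insert_right.mp h).1
      have hdt : Disjoint s t' := (Finset.disjoint_insert_right.mp h).2
      have hxst : x ∉ s ∪ t' := by simp [hxs, hx]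
      rw [Finset.union_insert, Finset.sum_powerset_insert hxst f, ih hdt f,
        ih hdt (fun u => f (insert x u))]
      rw [← Finset.sum_add_distrib]
      refine Finset.sum_congr rfl (fun a _ => ?_)
      have hstep : ∑ b ∈ (insert x t').powerset, f (a ∪ b) =
          (∑ b ∈ t'.powerset, f (a ∪ b)) + ∑ b ∈ t'.powerset, f (a ∪ insert x b) :=
        Finset.sum_powerset_insert hx _
      rw [hstep]
      congr 1
      exact Finset.sum_congr rfl (fun b _ => by rw [Finset.union_insert])

-- binomial
lemma binom_sum (t : Finset ℕ) (p : ℝ) :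
    ∑ C ∈ t.powerset, p ^ C.card * (1 - p) ^ (t.card - C.card) = 1 := by
  have h := Finset.prod_add (fun _ : ℕ => p) (fun _ : ℕ => (1 - p)) t
  simp only [add_sub_cancel, Finset.prod_const, one_pow] at h
  have h2 : ∑ C ∈ t.powerset, p ^ C.card * (1 - p) ^ (t.card - C.card)
      = ∑ C ∈ t.powerset, p ^ C.card * (1 - p) ^ ((t \ C).card) :=
    Finset.sum_congr rfl (fun C hC => by rw [Finset.card_sdiff_of_subset (Finset.mem_powerset.mp hC)])
  rw [h2, ← h]

-- cast lemma
lemma coe_inter_Iio {A C : Finset ℕ} {n : ℕ} (hA : A ⊆ Finset.Icc 1 (n-1))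
    (hC : C ⊆ Finset.Icc (n+1) M) :
    ((A ∪ C : Finset ℕ) : Set ℕ) ∩ Set.Iio n = (A : Set ℕ) := by
  ext x
  simp only [Set.mem_inter_iff, Finset.coe_union, Set.mem_union, Finset.mem_coe, Set.mem_Iio]
  constructor
  · rintro ⟨hx | hx, hlt⟩
    · exact hx
    · have := Finset.mem_Icc.mp (hC hx); omega
  · intro hx
    have := Finset.mem_Icc.mp (hA hx)
    exact ⟨Or.inl hx, by omega⟩

lemma coe_insert_inter_Iio {A C : Finset ℕ} {n : ℕ} (hA : A ⊆ Finset.Icc 1 (n-1))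
    (hC : C ⊆ Finset.Icc (n+1) M) :
    ((insert n (A ∪ C) : Finset ℕ) : Set ℕ) ∩ Set.Iio n = (A : Set ℕ) := by
  rw [Finset.coe_insert, Set.insert_inter_of_notMem (by simp)]
  exact coe_inter_Iio hA hC

-- counting: embDim
lemma embDim_closure_eq (M : ℕ) (B : Finset ℕ) (hB : B ⊆ Finset.Icc 1 M) :
    (embDim (AddSubmonoid.closure (B : Set ℕ)) : ℝ) =
      ∑ n ∈ Finset.Icc 1 M,
        (if n ∈ B ∧ n ∉ AddSubmonoid.closure ((B : Set ℕ) ∩ Set.Iio n) then (1:ℝ) else 0) := by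
  have hBpos : ∀ b ∈ B, 0 < b := fun b hb => (Finset.mem_Icc.mp (hB hb)).1
  have hset : minGens (AddSubmonoid.closure (B : Set ℕ)) =
      ↑(B.filter (fun n => n ∉ AddSubmonoid.closure ((B : Set ℕ) ∩ Set.Iio n))) := by
    ext n
    simp only [Finset.coe_filter, Set.mem_setOf_eq]
    exact minGens_closure_iff hBpos
  rw [embDim, hset, Set.ncard_coe_finset]
  have hfe : B.filter (fun n => n ∉ AddSubmonoid.closure ((B : Set ℕ) ∩ Set.Iio n)) =
      (Finset.Icc 1 M).filter
        (fun n => n ∈ B ∧ n ∉ AddSubmonoid.closure ((B : Set ℕ) ∩ Set.Iio n)) := by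
    ext x
    simp only [Finset.mem_filter]
    constructor
    · rintro ⟨h1, h2⟩; exact ⟨hB h1, h1, h2⟩
    · rintro ⟨_, h1, h2⟩; exact ⟨h1, h2⟩
  rw [hfe, Finset.card_filter]
  push_cast
  exact Finset.sum_congr rfl (fun n _ => by split <;> simp

)

-- counting: gaps
lemma gapsUpTo_closure_eq (M : ℕ) (B : Finset ℕ) (hB : B ⊆ Finset.Icc 1 M) :
    ((gapsUpTo (AddSubmonoid.closure (B : Set ℕ)) M : ℕ) : ℝ) =
      ∑ n ∈ Finset.Icc 1 M,
        (if n ∉ B ∧ n ∉ AddSubmonoid.closure ((B : Set ℕ) ∩ Set.Iio n) then (1:ℝ) else 0) := by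
  have hset : {x : ℕ | x ∉ AddSubmonoid.closure (B : Set ℕ) ∧ x ≤ M} =
      ↑((Finset.Icc 1 M).filter (fun n => n ∉ AddSubmonoid.closure (B : Set ℕ))) := by
    ext x
    simp only [Set.mem_setOf_eq, Finset.coe_filter, Finset.mem_Icc]
    constructor
    · rintro ⟨h1, h2⟩
      have hx0 : x ≠ 0 := by rintro rfl; exact h1 (zero_mem _)
      exact ⟨⟨by omega, h2⟩, h1⟩
    · rintro ⟨⟨_, h2⟩, h1⟩; exact ⟨h1, h2⟩
  rw [gapsUpTo, hset, Set.ncard_coe_finset, Finset.card_filter]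
  push_cast
  refine Finset.sum_congr rfl (fun n _ => ?_)
  have : n ∉ AddSubmonoid.closure (B : Set ℕ) ↔
      n ∉ B ∧ n ∉ AddSubmonoid.closure ((B : Set ℕ) ∩ Set.Iio n) := by
    rw [mem_closure_iff_split]; push_neg; simp
  exact if_congr this rfl rfl

-- key per-n summation lemma
lemma key_sum (M n : ℕ) (hn1 : 1 ≤ n) (hn2 : n ≤ M) (p : ℝ) (c : Bool) :
    ∑ B ∈ (Finset.Icc 1 M).powerset,
      (if ((n ∈ B) = (c = true)) ∧ n ∉ AddSubmonoid.closure ((B : Set ℕ) ∩ Set.Iio n)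
        then wt p M B else 0)
    = (if c then p else (1 - p)) * anp n p := by
  classical
  set f : Finset ℕ → ℝ := fun B =>
    if ((n ∈ B) = (c = true)) ∧ n ∉ AddSubmonoid.closure ((B : Set ℕ) ∩ Set.Iio n)
      then wt p M B else 0 with hf
  have hsplit : Finset.Icc 1 M = Finset.Icc 1 (n-1) ∪ insert n (Finset.Icc (n+1) M) := by
    ext x
    simp only [Finset.mem_Icc, Finset.mem_union, Finset.mem_insert]
    omega
  have hdisj : Disjoint (Finset.Icc 1 (n-1)) (insert n (Finset.Icc (n+1) M)) := by
    rw [Finset.disjoint_insert_right]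
    constructor
    · simp; omega
    · rw [Finset.disjoint_left]
      intro x hx hx'
      have := Finset.mem_Icc.mp hx
      have := Finset.mem_Icc.mp hx'
      omega
  rw [hsplit, sum_pow_union _ _ hdisj f]
  have hnn : n ∉ Finset.Icc (n+1) M := by simp
  have step : ∀ a ∈ (Finset.Icc 1 (n-1)).powerset,
      ∑ b ∈ (insert n (Finset.Icc (n+1) M)).powerset, f (a ∪ b)
      = ∑ b ∈ (Finset.Icc (n+1) M).powerset, (f (a ∪ b) + f (insert n (a ∪ b))) := by
    intro a _
    have h1 : ∑ b ∈ (insert n (Finset.Icc (n+1) M)).powerset, f (a ∪ b)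
        = (∑ b ∈ (Finset.Icc (n+1) M).powerset, f (a ∪ b))
          + ∑ b ∈ (Finset.Icc (n+1) M).powerset, f (a ∪ insert n b) :=
      Finset.sum_powerset_insert hnn _
    rw [h1, ← Finset.sum_add_distrib]
    exact Finset.sum_congr rfl (fun b _ => by rw [Finset.union_insert])
  rw [Finset.sum_congr rfl step]
  -- now evaluate each term
  have hcardA : (Finset.Icc 1 (n-1)).card = n - 1 := by rw [Nat.card_Icc]; omega
  have hcardC : (Finset.Icc (n+1) M).card = M - n := by rw [Nat.card_Icc]; omega
  have main : ∀ A ∈ (Finset.Icc 1 (n-1)).powerset, ∀ C ∈ (Finset.Icc (n+1) M).powerset,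
      f (A ∪ C) + f (insert n (A ∪ C))
      = ((if c then p else (1-p)) *
          (if n ∉ AddSubmonoid.closure (A : Set ℕ) then
            p ^ A.card * (1 - p) ^ (n - 1 - A.card) else 0))
        * (p ^ C.card * (1 - p) ^ (M - n - C.card)) := by
    intro A hA C hC
    rw [Finset.mem_powerset] at hA hC
    have hnA : n ∉ A := fun h => by have := Finset.mem_Icc.mp (hA h); omega
    have hnC : n ∉ C := fun h => by have := Finset.mem_Icc.mp (hC h); omega
    have hnAC : n ∉ A ∪ C := by simp [hnA, hnC]
    have hACdisj : Disjoint A C := by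
      rw [Finset.disjoint_left]
      intro x hx hx'
      have := Finset.mem_Icc.mp (hA hx)
      have := Finset.mem_Icc.mp (hC hx')
      omega
    have hcardAC : (A ∪ C).card = A.card + C.card := Finset.card_union_of_disjoint hACdisj
    have hAle : A.card ≤ n - 1 := hcardA ▸ Finset.card_le_card hA
    have hCle : C.card ≤ M - n := hcardC ▸ Finset.card_le_card hC
    have hiio1 : ((A ∪ C : Finset ℕ) : Set ℕ) ∩ Set.Iio n = (A : Set ℕ) :=
      coe_inter_Iio hA hC
    have hiio2 : ((insert n (A ∪ C) : Finset ℕ) : Set ℕ) ∩ Set.Iio n = (A : Set ℕ) :=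
      coe_insert_inter_Iio hA hC
    have hw1 : wt p M (A ∪ C) = (1 - p) * (p ^ A.card * (1 - p) ^ (n - 1 - A.card))
        * (p ^ C.card * (1 - p) ^ (M - n - C.card)) := by
      rw [wt, hcardAC]
      have he : M - (A.card + C.card) = (n - 1 - A.card) + (M - n - C.card) + 1 := by omega
      rw [he, pow_add, pow_add, pow_add, pow_one]
      ring
    have hw2 : wt p M (insert n (A ∪ C)) = p * (p ^ A.card * (1 - p) ^ (n - 1 - A.card))
        * (p ^ C.card * (1 - p) ^ (M - n - C.card)) := by
      rw [wt, Finset.card_insert_of_notMem hnAC, hcardAC]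
      have he : M - (A.card + C.card + 1) = (n - 1 - A.card) + (M - n - C.card) := by omega
      rw [he, pow_add, pow_add, pow_succ]
      ring
    rw [hf]
    simp only [hiio1, hiio2, hnAC, Finset.mem_insert_self, hw1, hw2]
    cases c with
    | false =>
        by_cases hcl : n ∈ AddSubmonoid.closure (A : Set ℕ) <;>
          simp [hcl] <;> ring
    | true =>
        by_cases hcl : n ∈ AddSubmonoid.closure (A : Set ℕ) <;>
          simp [hcl] <;> ring
  rw [Finset.sum_congr rfl (fun A hA => Finset.sum_congr rfl (main A hA))]
  have inner : ∀ A ∈ (Finset.Icc 1 (n-1)).powerset,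
      ∑ C ∈ (Finset.Icc (n+1) M).powerset,
        ((if c then p else (1-p)) *
          (if n ∉ AddSubmonoid.closure (A : Set ℕ) then
            p ^ A.card * (1 - p) ^ (n - 1 - A.card) else 0))
        * (p ^ C.card * (1 - p) ^ (M - n - C.card))
      = (if c then p else (1-p)) *
          (if n ∉ AddSubmonoid.closure (A : Set ℕ) then
            p ^ A.card * (1 - p) ^ (n - 1 - A.card) else 0) := by
    intro A _
    rw [← Finset.mul_sum]
    have : ∑ C ∈ (Finset.Icc (n+1) M).powerset,
        p ^ C.card * (1 - p) ^ (M - n - C.card) = 1 := by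
      have := binom_sum (Finset.Icc (n+1) M) p
      rw [hcardC] at this
      exact this
    rw [this, mul_one]
  rw [Finset.sum_congr rfl inner, ← Finset.mul_sum, anp]

theorem statement11 (M : ℕ) (hM : 1 ≤ M) (p : ℝ) (hp : p ∈ Set.Icc (0 : ℝ) 1) :
    expectVal M p embDim = p * ∑ n ∈ Finset.Icc 1 M, anp n p ∧
    expectVal M p (fun S => gapsUpTo S M) = (1 - p) * ∑ n ∈ Finset.Icc 1 M, anp n p := by
  constructor
  · rw [expectVal]
    have h1 : ∀ B ∈ (Finset.Icc 1 M).powerset,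
        (embDim (AddSubmonoid.closure (B : Set ℕ)) : ℝ) * wt p M B
        = ∑ n ∈ Finset.Icc 1 M,
            (if ((n ∈ B) = (true = true)) ∧
              n ∉ AddSubmonoid.closure ((B : Set ℕ) ∩ Set.Iio n) then wt p M B else 0) := by
      intro B hB
      rw [embDim_closure_eq M B (Finset.mem_powerset.mp hB), Finset.sum_mul]
      refine Finset.sum_congr rfl (fun n _ => ?_)
      simp only [eq_self_iff_true, eq_iff_iff, iff_true, ite_mul, one_mul, zero_mul]
    rw [Finset.sum_congr rfl h1, Finset.sum_comm, Finset.mul_sum]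
    refine Finset.sum_congr rfl (fun n hn => ?_)
    have hn' := Finset.mem_Icc.mp hn
    have := key_sum M n hn'.1 hn'.2 p true
    simpa using this
  · rw [expectVal]
    have h1 : ∀ B ∈ (Finset.Icc 1 M).powerset,
        ((gapsUpTo (AddSubmonoid.closure (B : Set ℕ)) M : ℕ) : ℝ) * wt p M B
        = ∑ n ∈ Finset.Icc 1 M,
            (if ((n ∈ B) = (false = true)) ∧
              n ∉ AddSubmonoid.closure ((B : Set ℕ) ∩ Set.Iio n) then wt p M B else 0) := by
      intro B hB
      rw [gapsUpTo_closure_eq M B (Finset.mem_powerset.mp hB), Finset.sum_mul]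
      refine Finset.sum_congr rfl (fun n _ => ?_)
      simp only [Bool.false_eq_true, eq_iff_iff, iff_false, ite_mul, one_mul, zero_mul]
    rw [Finset.sum_congr rfl h1, Finset.sum_comm, Finset.mul_sum]
    refine Finset.sum_congr rfl (fun n hn => ?_)
    have hn' := Finset.mem_Icc.mp hn
    have := key_sum M n hn'.1 hn'.2 p false
    simpa using this
end

section
/- Let p ∈ (0,1) be constant. Then lim_{M→∞} ( E[g(𝒮_M)] − E[g_M(𝒮_M)] ) = 0, where 𝒮_M ∼ S(M, p), g_M(S) denotes the number of gaps of S that are at most M, and g is taken to be 0 on semigroups that are not cofinite. -/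
open Filter Topology
open scoped Classical BigOperators

/-! ### Auxiliary lemmas -/

lemma aux_mul_self_mem (S : AddSubmonoid ℕ) {s : ℕ} (h : s ∈ S) (k : ℕ) : k * s ∈ S := by
  simpa [smul_eq_mul] using S.nsmul_mem h k

lemma aux_mem_of_consec (S : AddSubmonoid ℕ) (s : ℕ) (hs : 0 < s) (h1 : s ∈ S) (h2 : s + 1 ∈ S)
    (n : ℕ) (hn : s * s ≤ n) : n ∈ S := by
  have hq : s ≤ n / s := (Nat.le_div_iff_mul_le hs).2 (by nlinarith)
  have hr : n % s < s := Nat.mod_lt _ hs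
  have hrq : n % s ≤ n / s := le_trans (le_of_lt hr) hq
  have key : n = (n / s - n % s) * s + (n % s) * (s + 1) := by
    have e1 : (n / s - n % s) * s = (n / s) * s - (n % s) * s := Nat.sub_mul _ _ _
    have e2 : (n % s) * (s + 1) = (n % s) * s + n % s := by ring
    have hle : (n % s) * s ≤ (n / s) * s := Nat.mul_le_mul_right _ hrq
    have hdm := Nat.div_add_mod n s
    have hc : s * (n / s) = (n / s) * s := mul_comm _ _
    rw [e1, e2]
    omega
  rw [key]
  exact S.add_mem (aux_mul_self_mem S h1 _) (aux_mul_self_mem S h2 _)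

lemma aux_ncard_le_of_lt {s : Set ℕ} {n : ℕ} (h : ∀ x ∈ s, x < n) : s.ncard ≤ n := by
  have hsub : s ⊆ ↑(Finset.range n) := by intro x hx; simp [Finset.mem_range, h x hx]
  calc s.ncard ≤ (↑(Finset.range n) : Set ℕ).ncard :=
        Set.ncard_le_ncard hsub (Finset.range n).finite_toSet
    _ = n := by rw [Set.ncard_coe_finset, Finset.card_range]

lemma aux_genus_eq_gapsUpTo (S : AddSubmonoid ℕ) (M : ℕ)
    (h : ∀ x ∈ gapSet S, x ≤ M) : genus S = gapsUpTo S M := by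
  unfold genus gapsUpTo
  congr 1
  ext x
  simp only [gapSet, Set.mem_setOf_eq] at *
  exact ⟨fun hx => ⟨hx, h x hx⟩, fun hx => hx.1⟩

lemma aux_gapsUpTo_le (S : AddSubmonoid ℕ) (M : ℕ) : gapsUpTo S M ≤ M + 1 := by
  apply aux_ncard_le_of_lt
  intro x hx
  simp only [Set.mem_setOf_eq] at hx
  omega

lemma aux_min_rep (B : Finset ℕ) (M : ℕ) (hB : ∀ b ∈ B, 1 ≤ b ∧ b ≤ M)
    {a : ℕ} (ha : a ∈ B) (hfin : (gapSet (AddSubmonoid.closure (B : Set ℕ))).Finite)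
    (n : ℕ) :
    ∃ m ∈ AddSubmonoid.closure (B : Set ℕ), m % a = n % a ∧ m ≤ (a - 1) * M := by
  set S := AddSubmonoid.closure (B : Set ℕ) with hS
  have ha1 : 1 ≤ a := (hB a ha).1
  have haM : a ≤ M := (hB a ha).2
  obtain ⟨N, hN⟩ : ∃ N, ∀ x ∈ gapSet S, x ≤ N := by
    rcases (gapSet S).eq_empty_or_nonempty with he | hne
    · exact ⟨0, by simp [he]⟩
    · obtain ⟨N, hN⟩ := hfin.bddAbove
      exact ⟨N, fun x hx => hN hx⟩
  have hex : ∃ m, m ∈ S ∧ m % a = n % a := by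
    refine ⟨n % a + a * (N + 1), ?_, by simp [Nat.add_mul_mod_self_left]⟩
    by_contra hc
    have h2 : n % a + a * (N + 1) ≤ N := hN _ hc
    have h3 : N + 1 ≤ a * (N + 1) := Nat.le_mul_of_pos_left _ (by omega)
    omega
  classical
  set P : ℕ → Prop := fun m => m ∈ S ∧ m % a = n % a with hP
  have hPex : ∃ m, P m := hex
  set m := Nat.find hPex with hm
  have hmP : P m := Nat.find_spec hPex
  refine ⟨m, hmP.1, hmP.2, ?_⟩
  obtain ⟨l, hl, hlsum⟩ := AddSubmonoid.exists_list_of_mem_closure hmP.1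
  by_cases hlen : l.length ≤ a - 1
  · have : l.sum ≤ l.length • M := List.sum_le_card_nsmul l M (fun x hx => (hB x (hl x hx)).2)
    rw [hlsum] at this
    calc m ≤ l.length * M := by simpa [smul_eq_mul] using this
      _ ≤ (a - 1) * M := Nat.mul_le_mul_right _ (by omega)
  · exfalso
    push_neg at hlen
    have hlen' : a ≤ l.length := by omega
    have hmaps : ∀ i ∈ Finset.range (a + 1), (l.take i).sum % a ∈ Finset.range a := by
      intro i _
      exact Finset.mem_range.2 (Nat.mod_lt _ (by omega))
    obtain ⟨i, hi, j, hj, hij, heq⟩ :=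
      Finset.exists_ne_map_eq_of_card_lt_of_maps_to
        (by simp : (Finset.range a).card < (Finset.range (a+1)).card) hmaps
    wlog hlt : i < j generalizing i j
    · exact this j hj i hi hij.symm heq.symm (by omega)
    simp only [Finset.mem_range] at hi hj
    have hjlen : j ≤ l.length := by omega
    have htt : (l.take j).take i = l.take i := by
      rw [List.take_take]; congr 1; omega
    have hsplit : (l.take i).sum + ((l.take j).drop i).sum = (l.take j).sum := by
      conv_rhs => rw [← List.take_append_drop i (l.take j)]
      rw [List.sum_append, htt]
    set c := ((l.take j).drop i).sum with hc
    have hcpos : 0 < c := by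
      have hlen2 : ((l.take j).drop i).length = j - i := by
        simp [List.length_drop, List.length_take]; omega
      have hne : ((l.take j).drop i) ≠ [] := by
        intro h; rw [h] at hlen2; simp at hlen2; omega
      obtain ⟨x, hx⟩ := List.exists_mem_of_ne_nil _ hne
      have hx1 : 1 ≤ x := (hB x (hl x (List.mem_of_mem_drop hx |> fun h => List.mem_of_mem_take h))).1
      calc 0 < x := hx1
        _ ≤ c := List.single_le_sum (fun _ _ => Nat.zero_le _) _ hx
    have hcmod : c % a = 0 := by
      have h1 : (l.take i).sum + c ≡ (l.take i).sum + 0 [MOD a] := by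
        show ((l.take i).sum + c) % a = ((l.take i).sum + 0) % a
        rw [Nat.add_zero, hsplit]
        exact heq.symm
      have h2 := Nat.ModEq.add_left_cancel' _ h1
      simpa [Nat.ModEq] using h2
    set m' := (l.take i).sum + (l.drop j).sum with hm'
    have hm'mem : m' ∈ S := by
      apply S.add_mem
      · exact AddSubmonoid.list_sum_mem _ (fun x hx => AddSubmonoid.subset_closure (hl x (List.mem_of_mem_take hx)))
      · exact AddSubmonoid.list_sum_mem _ (fun x hx => AddSubmonoid.subset_closure (hl x (List.mem_of_mem_drop hx)))
    have hmeq : m' + c = m := by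
      have : (l.take j).sum + (l.drop j).sum = m := by
        rw [← List.sum_append, List.take_append_drop, hlsum]
      omega
    have hm'mod : m' % a = n % a := by
      have h1 : m % a = m' % a := by
        rw [← hmeq, Nat.add_mod, hcmod]
        simp
      rw [← h1]; exact hmP.2
    have hm'lt : m' < m := by omega
    exact Nat.find_min hPex hm'lt ⟨hm'mem, hm'mod⟩

lemma aux_genus_le_sq (B : Finset ℕ) (M : ℕ) (hB : ∀ b ∈ B, 1 ≤ b ∧ b ≤ M) :
    genus (AddSubmonoid.closure (B : Set ℕ)) ≤ M * M := by
  set S := AddSubmonoid.closure (B : Set ℕ) with hS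
  by_cases hfin : (gapSet S).Finite
  swap
  · unfold genus; rw [Set.Infinite.ncard (by simpa using hfin)]; exact Nat.zero_le _
  rcases B.eq_empty_or_nonempty with he | hne
  · exfalso
    apply hfin.infinite_compl
    have : S = ⊥ := by rw [hS, he]; simp
    have hcompl : (gapSet S)ᶜ = {0} := by
      ext x; simp [gapSet, this, AddSubmonoid.mem_bot]
    rw [hcompl]; exact Set.finite_singleton 0
  obtain ⟨a, ha⟩ := hne
  have ha1 := (hB a ha).1
  have haM := (hB a ha).2
  apply aux_ncard_le_of_lt
  intro x hx
  by_contra hge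
  push_neg at hge
  obtain ⟨m, hmS, hmmod, hmle⟩ := aux_min_rep B M hB ha hfin x
  have hmlt : m ≤ x := by
    have h1 : (a - 1) * M ≤ M * M := Nat.mul_le_mul_right M (by omega)
    omega
  have hdvd : a ∣ x - m := (Nat.modEq_iff_dvd' hmlt).1 (by rw [Nat.ModEq]; omega)
  obtain ⟨k, hk⟩ := hdvd
  have hck : a * k = k * a := mul_comm _ _
  have : x = m + k * a := by omega
  have hxS : x ∈ S := by
    rw [this]
    exact S.add_mem hmS (aux_mul_self_mem S (AddSubmonoid.subset_closure ha) k)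
  exact hx hxS

/-! ### Probability lemmas -/

noncomputable def auxW (p : ℝ) (s B : Finset ℕ) : ℝ := p ^ B.card * (1 - p) ^ (s.card - B.card)

lemma auxW_total (p : ℝ) (s : Finset ℕ) : ∑ B ∈ s.powerset, auxW p s B = 1 := by
  classical
  have h := Finset.prod_add (fun _ : ℕ => p) (fun _ : ℕ => 1 - p) s
  simp only [Finset.prod_const] at h
  have h' : ∑ B ∈ s.powerset, auxW p s B = (p + (1 - p)) ^ s.card := by
    rw [h]
    apply Finset.sum_congr rfl
    intro B hB
    unfold auxW
    rw [Finset.card_sdiff_of_subset (Finset.mem_powerset.1 hB)]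
  rw [h']
  norm_num

lemma aux_sum_powerset_union_split (s t : Finset ℕ) (hd : Disjoint s t) (f g : Finset ℕ → ℝ) :
    ∑ B ∈ (s ∪ t).powerset, f (B ∩ s) * g (B ∩ t)
      = (∑ C ∈ s.powerset, f C) * (∑ D ∈ t.powerset, g D) := by
  classical
  rw [Finset.sum_mul_sum]
  rw [← Finset.sum_product']
  apply Finset.sum_nbij' (fun B => (B ∩ s, B ∩ t)) (fun CD => CD.1 ∪ CD.2)
  · intro B hB
    simp only [Finset.mem_product, Finset.mem_powerset]
    exact ⟨Finset.inter_subset_right, Finset.inter_subset_right⟩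
  · intro CD hCD
    simp only [Finset.mem_product, Finset.mem_powerset] at hCD ⊢
    exact Finset.union_subset (hCD.1.trans Finset.subset_union_left)
      (hCD.2.trans Finset.subset_union_right)
  · intro B hB
    simp only [Finset.mem_powerset] at hB
    rw [← Finset.inter_union_distrib_left]
    exact Finset.inter_eq_left.2 hB
  · intro CD hCD
    simp only [Finset.mem_product, Finset.mem_powerset] at hCD
    have hds : ∀ x ∈ CD.2, x ∉ s := fun x hx hxs => Finset.disjoint_right.1 hd (hCD.2 hx) hxs
    have hdt : ∀ x ∈ CD.1, x ∉ t := fun x hx hxt => Finset.disjoint_left.1 hd (hCD.1 hx) hxt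
    have h1 : (CD.1 ∪ CD.2) ∩ s = CD.1 := by
      ext x
      simp only [Finset.mem_inter, Finset.mem_union]
      constructor
      · rintro ⟨h | h, hs⟩
        · exact h
        · exact absurd hs (hds x h)
      · intro h; exact ⟨Or.inl h, hCD.1 h⟩
    have h2 : (CD.1 ∪ CD.2) ∩ t = CD.2 := by
      ext x
      simp only [Finset.mem_inter, Finset.mem_union]
      constructor
      · rintro ⟨h | h, ht⟩
        · exact absurd ht (hdt x h)
        · exact h
      · intro h; exact ⟨Or.inr h, hCD.2 h⟩
    ext <;> simp [h1, h2]
  · intro B hB; rfl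

lemma auxW_factor (p : ℝ) (s t B : Finset ℕ) (hd : Disjoint s t) (hB : B ⊆ s ∪ t) :
    auxW p (s ∪ t) B = auxW p s (B ∩ s) * auxW p t (B ∩ t) := by
  have hBs : (B ∩ s) ⊆ s := Finset.inter_subset_right
  have hBt : (B ∩ t) ⊆ t := Finset.inter_subset_right
  have hcard : B.card = (B ∩ s).card + (B ∩ t).card := by
    rw [← Finset.card_union_of_disjoint (Finset.disjoint_of_subset_left Finset.inter_subset_right
      (Finset.disjoint_of_subset_right Finset.inter_subset_right hd))]
    congr 1
    rw [← Finset.inter_union_distrib_left]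
    exact (Finset.inter_eq_left.2 hB).symm
  have hcu : (s ∪ t).card = s.card + t.card := Finset.card_union_of_disjoint hd
  have h1 : (B ∩ s).card ≤ s.card := Finset.card_le_card hBs
  have h2 : (B ∩ t).card ≤ t.card := Finset.card_le_card hBt
  have hsub : (s ∪ t).card - B.card = (s.card - (B ∩ s).card) + (t.card - (B ∩ t).card) := by
    omega
  unfold auxW
  rw [hsub, hcard, pow_add, pow_add]
  ring

def auxPr (j : ℕ) : Finset ℕ := {2 * j + 1, 2 * j + 2}

lemma auxPr_disjoint {j k : ℕ} (h : j ≠ k) : Disjoint (auxPr j) (auxPr k) := by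
  rw [Finset.disjoint_left]
  intro x hx hx'
  simp only [auxPr, Finset.mem_insert, Finset.mem_singleton] at hx hx'
  omega

lemma aux_pairSum (p : ℝ) (j : ℕ) :
    ∑ C ∈ (auxPr j).powerset, (if ¬ auxPr j ⊆ C then auxW p (auxPr j) C else 0) = 1 - p ^ 2 := by
  classical
  have hcard : (auxPr j).card = 2 := by
    rw [auxPr, Finset.card_insert_of_notMem (by simp only [Finset.mem_singleton]; omega),
      Finset.card_singleton]
  have hsplit : ∀ C ∈ (auxPr j).powerset,
      (if ¬ auxPr j ⊆ C then auxW p (auxPr j) C else 0)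
        = auxW p (auxPr j) C - (if auxPr j ⊆ C then auxW p (auxPr j) C else 0) := by
    intro C _
    by_cases h : auxPr j ⊆ C <;> simp [h]
  rw [Finset.sum_congr rfl hsplit, Finset.sum_sub_distrib, auxW_total]
  have hsingle : ∑ C ∈ (auxPr j).powerset, (if auxPr j ⊆ C then auxW p (auxPr j) C else 0) = p ^ 2 := by
    rw [Finset.sum_eq_single (auxPr j)]
    · simp [auxW, hcard]
    · intro C hC hne
      rw [if_neg]
      intro hsub
      exact hne (Finset.Subset.antisymm (Finset.mem_powerset.1 hC) hsub)
    · intro h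
      exact absurd (Finset.mem_powerset.2 (Finset.Subset.refl _)) h
  rw [hsingle]

lemma aux_badSum (p : ℝ) (J : Finset ℕ) : ∀ (s : Finset ℕ), (∀ j ∈ J, auxPr j ⊆ s) →
    ∑ B ∈ s.powerset, (if ∀ j ∈ J, ¬ auxPr j ⊆ B then auxW p s B else 0)
      = (1 - p ^ 2) ^ J.card := by
  classical
  induction J using Finset.induction_on with
  | empty =>
    intro s _
    simp [auxW_total]
  | @insert a J' ha ih =>
    intro s hs
    have hpa : auxPr a ⊆ s := hs a (Finset.mem_insert_self _ _)
    have hrest : ∀ j ∈ J', auxPr j ⊆ s \ auxPr a := by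
      intro j hj
      apply Finset.subset_sdiff.2
      exact ⟨hs j (Finset.mem_insert_of_mem hj), auxPr_disjoint (fun h => ha (h ▸ hj))⟩
    have hd : Disjoint (auxPr a) (s \ auxPr a) := Finset.disjoint_sdiff
    have hu : auxPr a ∪ (s \ auxPr a) = s := Finset.union_sdiff_of_subset hpa
    have key : ∀ B ∈ s.powerset,
        (if ∀ j ∈ insert a J', ¬ auxPr j ⊆ B then auxW p s B else 0)
          = (if ¬ auxPr a ⊆ (B ∩ auxPr a) then auxW p (auxPr a) (B ∩ auxPr a) else 0)
            * (if ∀ j ∈ J', ¬ auxPr j ⊆ (B ∩ (s \ auxPr a)) then auxW p (s \ auxPr a) (B ∩ (s \ auxPr a)) else 0) := by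
      intro B hB
      have hBsub : B ⊆ s := Finset.mem_powerset.1 hB
      have e1 : (auxPr a ⊆ B ∩ auxPr a) ↔ auxPr a ⊆ B := by
        rw [Finset.subset_inter_iff]
        exact ⟨fun h => h.1, fun h => ⟨h, Finset.Subset.refl _⟩⟩
      have e2 : ∀ j ∈ J', ((auxPr j ⊆ B ∩ (s \ auxPr a)) ↔ auxPr j ⊆ B) := by
        intro j hj
        rw [Finset.subset_inter_iff]
        exact ⟨fun h => h.1, fun h => ⟨h, hrest j hj⟩⟩
      have hw : auxW p s B = auxW p (auxPr a) (B ∩ auxPr a) * auxW p (s \ auxPr a) (B ∩ (s \ auxPr a)) := by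
        have h := auxW_factor p (auxPr a) (s \ auxPr a) B hd (by rw [hu]; exact hBsub)
        rw [hu] at h
        exact h
      have hcond : (∀ j ∈ insert a J', ¬ auxPr j ⊆ B)
          ↔ ((¬ auxPr a ⊆ (B ∩ auxPr a)) ∧ ∀ j ∈ J', ¬ auxPr j ⊆ (B ∩ (s \ auxPr a))) := by
        rw [Finset.forall_mem_insert, e1]
        constructor
        · rintro ⟨h1, h2⟩
          exact ⟨h1, fun j hj hc => h2 j hj ((e2 j hj).1 hc)⟩
        · rintro ⟨h1, h2⟩
          exact ⟨h1, fun j hj hc => h2 j hj ((e2 j hj).2 hc)⟩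
      by_cases hc : ∀ j ∈ insert a J', ¬ auxPr j ⊆ B
      · rw [if_pos hc, if_pos (hcond.1 hc).1, if_pos (hcond.1 hc).2, hw]
      · rw [if_neg hc]
        rcases not_and_or.1 (fun hh => hc (hcond.2 hh)) with h | h
        · rw [if_neg h, zero_mul]
        · rw [if_neg h, mul_zero]
    rw [Finset.sum_congr rfl key]
    have hsplit := aux_sum_powerset_union_split (auxPr a) (s \ auxPr a) hd
      (fun C => if ¬ auxPr a ⊆ C then auxW p (auxPr a) C else 0)
      (fun D => if ∀ j ∈ J', ¬ auxPr j ⊆ D then auxW p (s \ auxPr a) D else 0)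
    rw [hu] at hsplit
    rw [hsplit, aux_pairSum, ih _ hrest, Finset.card_insert_of_notMem ha, pow_succ]
    ring

theorem statement15 (p : ℝ) (hp : p ∈ Set.Ioo (0 : ℝ) 1) :
    Tendsto (fun M : ℕ =>
        expectVal M p genus - expectVal M p (fun S => gapsUpTo S M))
      atTop (𝓝 0) := by
  obtain ⟨hp0, hp1⟩ := hp
  set q : ℝ := 1 - p ^ 2 with hqdef
  have hq0 : 0 < q := by nlinarith
  have hq1 : q < 1 := by nlinarith
  -- main bound
  have main : ∀ M : ℕ,
      |expectVal M p genus - expectVal M p (fun S => gapsUpTo S M)|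
        ≤ ((M : ℝ) * M + M + 1) * q ^ (Nat.sqrt M / 2) := by
    intro M
    set t := Nat.sqrt M / 2 with ht
    set C : ℝ := (M : ℝ) * M + M + 1 with hC
    have hwt : ∀ B : Finset ℕ, wt p M B = auxW p (Finset.Icc 1 M) B := by
      intro B; unfold wt auxW; rw [Nat.card_Icc, Nat.add_sub_cancel]
    have hwt0 : ∀ B : Finset ℕ, 0 ≤ wt p M B := by
      intro B
      exact mul_nonneg (pow_nonneg hp0.le _) (pow_nonneg (by linarith) _)
    have hsq : Nat.sqrt M * Nat.sqrt M ≤ M := by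
      have := Nat.sqrt_le' M
      nlinarith [this, sq_nonneg (Nat.sqrt M)]
    have hIcc : ∀ j ∈ Finset.range t, auxPr j ⊆ Finset.Icc 1 M := by
      intro j hj
      rw [Finset.mem_range] at hj
      intro x hx
      simp only [auxPr, Finset.mem_insert, Finset.mem_singleton] at hx
      rw [Finset.mem_Icc]
      have h1 : 2 * t ≤ Nat.sqrt M := by omega
      have h2 : Nat.sqrt M ≤ M := Nat.sqrt_le_self M
      omega
    -- rewrite the difference as a single sum
    have hdiff : expectVal M p genus - expectVal M p (fun S => gapsUpTo S M)
        = ∑ B ∈ (Finset.Icc 1 M).powerset,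
            ((genus (AddSubmonoid.closure (B : Set ℕ)) : ℝ)
              - (gapsUpTo (AddSubmonoid.closure (B : Set ℕ)) M : ℝ)) * wt p M B := by
      unfold expectVal
      rw [← Finset.sum_sub_distrib]
      apply Finset.sum_congr rfl
      intro B _
      ring
    rw [hdiff]
    -- pointwise bound
    have hpt : ∀ B ∈ (Finset.Icc 1 M).powerset,
        |((genus (AddSubmonoid.closure (B : Set ℕ)) : ℝ)
            - (gapsUpTo (AddSubmonoid.closure (B : Set ℕ)) M : ℝ)) * wt p M B|
          ≤ (if ∀ j ∈ Finset.range t, ¬ auxPr j ⊆ B then C * wt p M B else 0) := by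
      intro B hB
      have hBsub : B ⊆ Finset.Icc 1 M := Finset.mem_powerset.1 hB
      have hB1M : ∀ b ∈ B, 1 ≤ b ∧ b ≤ M := by
        intro b hb
        have := hBsub hb
        rw [Finset.mem_Icc] at this
        exact this
      set S := AddSubmonoid.closure (B : Set ℕ) with hSdef
      by_cases hbad : ∀ j ∈ Finset.range t, ¬ auxPr j ⊆ B
      · rw [if_pos hbad, abs_mul, abs_of_nonneg (hwt0 B)]
        apply mul_le_mul_of_nonneg_right _ (hwt0 B)
        have hg : (genus S : ℝ) ≤ (M : ℝ) * M := by
          have := aux_genus_le_sq B M hB1M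
          push_cast
          exact_mod_cast (by exact_mod_cast this : (genus S : ℝ) ≤ ((M * M : ℕ) : ℝ))
        have hu : (gapsUpTo S M : ℝ) ≤ (M : ℝ) + 1 := by
          have := aux_gapsUpTo_le S M
          exact_mod_cast (by exact_mod_cast this : (gapsUpTo S M : ℝ) ≤ ((M + 1 : ℕ) : ℝ))
        have hg0 : (0 : ℝ) ≤ (genus S : ℝ) := Nat.cast_nonneg _
        have hu0 : (0 : ℝ) ≤ (gapsUpTo S M : ℝ) := Nat.cast_nonneg _
        rw [abs_le]
        constructor <;> [linarith; linarith]
      · rw [if_neg hbad]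
        push_neg at hbad
        obtain ⟨j, hj, hjsub⟩ := hbad
        rw [Finset.mem_range] at hj
        have hmem1 : 2 * j + 1 ∈ S :=
          AddSubmonoid.subset_closure (hjsub (by simp [auxPr]))
        have hmem2 : 2 * j + 1 + 1 ∈ S := by
          have : 2 * j + 2 ∈ S :=
            AddSubmonoid.subset_closure (hjsub (by simp [auxPr]))
          simpa [show 2 * j + 1 + 1 = 2 * j + 2 from rfl] using this
        have hsM : (2 * j + 1) * (2 * j + 1) ≤ M := by
          have h1 : 2 * j + 1 ≤ Nat.sqrt M := by omega
          calc (2 * j + 1) * (2 * j + 1) ≤ Nat.sqrt M * Nat.sqrt M :=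
                Nat.mul_le_mul h1 h1
            _ ≤ M := hsq
        have hgap : ∀ x ∈ gapSet S, x ≤ M := by
          intro x hx
          by_contra hc
          push_neg at hc
          exact hx (aux_mem_of_consec S (2 * j + 1) (by omega) hmem1 hmem2 x (by omega))
        rw [aux_genus_eq_gapsUpTo S M hgap]
        simp
    calc |∑ B ∈ (Finset.Icc 1 M).powerset,
            ((genus (AddSubmonoid.closure (B : Set ℕ)) : ℝ)
              - (gapsUpTo (AddSubmonoid.closure (B : Set ℕ)) M : ℝ)) * wt p M B|
        ≤ ∑ B ∈ (Finset.Icc 1 M).powerset,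
            |((genus (AddSubmonoid.closure (B : Set ℕ)) : ℝ)
              - (gapsUpTo (AddSubmonoid.closure (B : Set ℕ)) M : ℝ)) * wt p M B| :=
          Finset.abs_sum_le_sum_abs _ _
      _ ≤ ∑ B ∈ (Finset.Icc 1 M).powerset,
            (if ∀ j ∈ Finset.range t, ¬ auxPr j ⊆ B then C * wt p M B else 0) :=
          Finset.sum_le_sum hpt
      _ = C * ∑ B ∈ (Finset.Icc 1 M).powerset,
            (if ∀ j ∈ Finset.range t, ¬ auxPr j ⊆ B then auxW p (Finset.Icc 1 M) B else 0) := by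
          rw [Finset.mul_sum]
          apply Finset.sum_congr rfl
          intro B _
          by_cases h : ∀ j ∈ Finset.range t, ¬ auxPr j ⊆ B
          · rw [if_pos h, if_pos h, hwt]
          · rw [if_neg h, if_neg h, mul_zero]
      _ = C * q ^ t := by
          rw [aux_badSum p (Finset.range t) (Finset.Icc 1 M) hIcc, Finset.card_range]
  -- the bounding sequence tends to 0
  have hmono : Tendsto (fun M : ℕ => Nat.sqrt M / 2) atTop atTop := by
    apply Filter.tendsto_atTop_atTop.2
    intro b
    refine ⟨(2 * b) * (2 * b), fun M hM => ?_⟩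
    have h1 : 2 * b ≤ Nat.sqrt M := Nat.le_sqrt.2 hM
    omega
  have hpsi : Tendsto (fun k : ℕ => 48 * (((k : ℝ) + 1) ^ 4 * q ^ k)) atTop (𝓝 0) := by
    have h1 : Tendsto (fun k : ℕ => ((k : ℝ)) ^ 4 * q ^ k) atTop (𝓝 0) :=
      tendsto_pow_const_mul_const_pow_of_lt_one 4 hq0.le hq1
    have h2 : Tendsto (fun k : ℕ => (((k + 1 : ℕ)) : ℝ) ^ 4 * q ^ (k + 1)) atTop (𝓝 0) :=
      h1.comp (Filter.tendsto_add_atTop_nat 1)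
    have h3 : Tendsto (fun k : ℕ => (48 / q) * ((((k + 1 : ℕ)) : ℝ) ^ 4 * q ^ (k + 1))) atTop (𝓝 0) := by
      have := h2.const_mul (48 / q)
      simpa using this
    apply h3.congr
    intro k
    push_cast
    rw [pow_succ]
    field_simp
    ring
  have hg : Tendsto (fun M : ℕ => 48 * (((Nat.sqrt M / 2 : ℕ) : ℝ) + 1) ^ 4 * q ^ (Nat.sqrt M / 2))
      atTop (𝓝 0) := by
    have := hpsi.comp hmono
    simpa [Function.comp_def, mul_assoc] using this
  apply squeeze_zero_norm _ hg
  intro M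
  set k := Nat.sqrt M / 2 with hk
  have hMk : (M : ℝ) ≤ ((2 * k + 2 : ℕ) : ℝ) * ((2 * k + 2 : ℕ) : ℝ) := by
    have h1 : Nat.sqrt M ≤ 2 * k + 1 := by omega
    have h2 : M < (Nat.sqrt M + 1) * (Nat.sqrt M + 1) := Nat.lt_succ_sqrt M
    have h3 : M ≤ (2 * k + 2) * (2 * k + 2) := by nlinarith
    exact_mod_cast Nat.cast_le.2 h3
  have hCle : (M : ℝ) * M + M + 1 ≤ 48 * (((k : ℕ) : ℝ) + 1) ^ 4 := by
    set X : ℝ := ((k : ℕ) : ℝ) + 1 with hX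
    have hX1 : (1 : ℝ) ≤ X := by
      have : (0 : ℝ) ≤ ((k : ℕ) : ℝ) := Nat.cast_nonneg _
      linarith
    have hM2 : (M : ℝ) ≤ 4 * X ^ 2 := by
      have : ((2 * k + 2 : ℕ) : ℝ) = 2 * X := by push_cast; ring
      rw [this] at hMk
      nlinarith
    have hM0 : (0 : ℝ) ≤ (M : ℝ) := Nat.cast_nonneg _
    have h4 : (M : ℝ) * M ≤ 16 * X ^ 4 := by nlinarith
    have hX2 : (1 : ℝ) ≤ X ^ 2 := by nlinarith
    have h5 : X ^ 2 ≤ X ^ 4 := by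
      nlinarith [mul_nonneg (sq_nonneg X) (by linarith : (0:ℝ) ≤ X ^ 2 - 1)]
    have h6 : (1 : ℝ) ≤ X ^ 4 := by linarith
    linarith
  calc ‖expectVal M p genus - expectVal M p (fun S => gapsUpTo S M)‖
      = |expectVal M p genus - expectVal M p (fun S => gapsUpTo S M)| := rfl
    _ ≤ ((M : ℝ) * M + M + 1) * q ^ k := main M
    _ ≤ (48 * (((k : ℕ) : ℝ) + 1) ^ 4) * q ^ k :=
        mul_le_mul_of_nonneg_right hCle (pow_nonneg hq0.le _)
    _ = 48 * (((k : ℕ) : ℝ) + 1) ^ 4 * q ^ k := by ring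
end

section
/- Let p ∈ (0,1) be constant. Then the series Σ_{n=1}^{∞} a_n(p) converges, and its value L satisfies (6 − 8p + 3p²)/(2p − 2p³ + p⁴) ≤ L ≤ (2 − p²)/p², where a_n(p) = Σ_{A ⊆ {1,…,n−1}, n ∉ ⟨A⟩} p^{|A|}(1−p)^{n−1−|A|}. -/
open Filter Topology Finset
open scoped Classical BigOperators

noncomputable def Pr (p : ℝ) (s : Finset ℕ) (E : Finset ℕ → Prop) : ℝ :=
  ∑ B ∈ s.powerset, if E B then (∏ i ∈ s, if i ∈ B then p else 1-p) else 0

variable {p : ℝ}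

lemma weight_nonneg (h0 : 0 ≤ p) (h1 : p ≤ 1) (s B : Finset ℕ) :
    0 ≤ ∏ i ∈ s, if i ∈ B then p else 1-p := by
  apply Finset.prod_nonneg
  intro i _
  split <;> linarith

lemma weight_eq (s B : Finset ℕ) (hB : B ⊆ s) :
    (∏ i ∈ s, if i ∈ B then p else 1-p) = p ^ B.card * (1-p) ^ (s.card - B.card) := by
  have hs : s = B ∪ (s \ B) := by
    rw [Finset.union_sdiff_of_subset hB]
  rw [hs, Finset.prod_union Finset.disjoint_sdiff]
  rw [Finset.prod_congr rfl (fun i hi => if_pos hi)]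
  rw [Finset.prod_congr rfl (fun i hi => if_neg (Finset.mem_sdiff.mp hi).2)]
  rw [Finset.prod_const, Finset.prod_const, Finset.card_sdiff_of_subset hB,
    Finset.card_union_of_disjoint Finset.disjoint_sdiff, Finset.card_sdiff_of_subset hB]
  congr 2
  omega

lemma Pr_total {s : Finset ℕ} : Pr p s (fun _ => True) = 1 := by
  unfold Pr
  simp only [if_true]
  have : ∑ B ∈ s.powerset, (∏ i ∈ s, if i ∈ B then p else 1-p)
      = ∑ B ∈ s.powerset, (∏ i ∈ B, p) * ∏ i ∈ s \ B, (1-p) := by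
    apply Finset.sum_congr rfl
    intro B hB
    rw [weight_eq s B (Finset.mem_powerset.mp hB), Finset.prod_const, Finset.prod_const,
      Finset.card_sdiff_of_subset (Finset.mem_powerset.mp hB)]
  rw [this, ← Finset.prod_add]
  simp

lemma Pr_nonneg (h0 : 0 ≤ p) (h1 : p ≤ 1) {s : Finset ℕ} {E : Finset ℕ → Prop} : 0 ≤ Pr p s E := by
  apply Finset.sum_nonneg
  intro B _
  split
  · exact weight_nonneg h0 h1 s B
  · exact le_refl 0

lemma Pr_mono (h0 : 0 ≤ p) (h1 : p ≤ 1) {s : Finset ℕ} {E E' : Finset ℕ → Prop}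
    (h : ∀ B ⊆ s, E B → E' B) : Pr p s E ≤ Pr p s E' := by
  apply Finset.sum_le_sum
  intro B hB
  by_cases hE : E B
  · rw [if_pos hE, if_pos (h B (Finset.mem_powerset.mp hB) hE)]
  · rw [if_neg hE]
    split
    · exact weight_nonneg h0 h1 s B
    · exact le_refl 0

lemma Pr_congr {s : Finset ℕ} {E E' : Finset ℕ → Prop}
    (h : ∀ B ⊆ s, E B ↔ E' B) : Pr p s E = Pr p s E' := by
  apply Finset.sum_congr rfl
  intro B hB
  have := h B (Finset.mem_powerset.mp hB)
  by_cases hE : E B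
  · rw [if_pos hE, if_pos (this.mp hE)]
  · rw [if_neg hE, if_neg (fun h' => hE (this.mpr h'))]

lemma Pr_le_one (h0 : 0 ≤ p) (h1 : p ≤ 1) {s : Finset ℕ} {E : Finset ℕ → Prop} :
    Pr p s E ≤ 1 := by
  have := Pr_mono (p := p) h0 h1 (s := s) (E := E) (E' := fun _ => True) (fun _ _ _ => trivial)
  rw [Pr_total] at this
  exact this

lemma Pr_compl {s : Finset ℕ} {E : Finset ℕ → Prop} :
    Pr p s (fun B => ¬ E B) = 1 - Pr p s E := by
  have : Pr p s (fun B => ¬ E B) + Pr p s E = 1 := by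
    rw [← Pr_total (p := p) (s := s)]
    unfold Pr
    rw [← Finset.sum_add_distrib]
    apply Finset.sum_congr rfl
    intro B _
    by_cases hE : E B
    · rw [if_pos hE, if_neg (not_not_intro hE), if_pos trivial, zero_add]
    · rw [if_pos hE, if_neg hE, if_pos trivial, add_zero]
  linarith

lemma sum_powerset_union {s t : Finset ℕ} (hst : Disjoint s t) (F : Finset ℕ → ℝ) :
    ∑ B ∈ (s ∪ t).powerset, F B = ∑ C ∈ s.powerset, ∑ D ∈ t.powerset, F (C ∪ D) := by
  rw [← Finset.sum_product']
  apply Finset.sum_nbij' (fun B => (B ∩ s, B ∩ t)) (fun P => P.1 ∪ P.2)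
  · intro B hB
    simp only [Finset.mem_product, Finset.mem_powerset] at *
    exact ⟨Finset.inter_subset_right, Finset.inter_subset_right⟩
  · intro P hP
    simp only [Finset.mem_product, Finset.mem_powerset] at *
    exact Finset.union_subset_union hP.1 hP.2
  · intro B hB
    simp only [Finset.mem_powerset] at hB
    rw [← Finset.inter_union_distrib_left]
    exact Finset.inter_eq_left.mpr hB
  · intro P hP
    simp only [Finset.mem_product, Finset.mem_powerset] at hP
    have h1 : (P.1 ∪ P.2) ∩ s = P.1 := by
      rw [Finset.union_inter_distrib_right, Finset.inter_eq_left.mpr hP.1,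
        Finset.disjoint_iff_inter_eq_empty.mp (hst.symm.mono_left hP.2), Finset.union_empty]
    have h2 : (P.1 ∪ P.2) ∩ t = P.2 := by
      rw [Finset.union_inter_distrib_right, Finset.inter_eq_left.mpr hP.2,
        Finset.disjoint_iff_inter_eq_empty.mp (hst.mono_left hP.1), Finset.empty_union]
    rw [h1, h2]
  · intro B hB
    simp only [Finset.mem_powerset] at hB
    have : B ∩ s ∪ B ∩ t = B := by
      rw [← Finset.inter_union_distrib_left]
      exact Finset.inter_eq_left.mpr hB
    rw [this]


lemma Pr_mul {s t : Finset ℕ} (hst : Disjoint s t) (E₁ E₂ : Finset ℕ → Prop) :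
    Pr p (s ∪ t) (fun B => E₁ (B ∩ s) ∧ E₂ (B ∩ t)) = Pr p s E₁ * Pr p t E₂ := by
  unfold Pr
  rw [sum_powerset_union hst, Finset.sum_mul_sum]
  apply Finset.sum_congr rfl
  intro C hC
  apply Finset.sum_congr rfl
  intro D hD
  simp only [Finset.mem_powerset] at hC hD
  have h1 : (C ∪ D) ∩ s = C := by
    rw [Finset.union_inter_distrib_right, Finset.inter_eq_left.mpr hC,
      Finset.disjoint_iff_inter_eq_empty.mp (hst.symm.mono_left hD), Finset.union_empty]
  have h2 : (C ∪ D) ∩ t = D := by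
    rw [Finset.union_inter_distrib_right, Finset.inter_eq_left.mpr hD,
      Finset.disjoint_iff_inter_eq_empty.mp (hst.mono_left hC), Finset.empty_union]
  have hw : (∏ i ∈ s ∪ t, if i ∈ C ∪ D then p else 1-p)
      = (∏ i ∈ s, if i ∈ C then p else 1-p) * ∏ i ∈ t, if i ∈ D then p else 1-p := by
    rw [Finset.prod_union hst]
    congr 1
    · apply Finset.prod_congr rfl
      intro i hi
      congr 1
      simp only [Finset.mem_union, eq_iff_iff]
      constructor
      · rintro (h | h)
        · exact h
        · exact absurd (hD h) (fun h' => (Finset.disjoint_left.mp hst hi h'))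
      · exact Or.inl
    · apply Finset.prod_congr rfl
      intro i hi
      congr 1
      simp only [Finset.mem_union, eq_iff_iff]
      constructor
      · rintro (h | h)
        · exact absurd (hC h) (fun h' => (Finset.disjoint_left.mp hst h' hi))
        · exact h
      · exact Or.inr
  beta_reduce
  rw [h1, h2, hw]
  by_cases hE1 : E₁ C <;> by_cases hE2 : E₂ D <;> simp [hE1, hE2]

lemma Pr_cyl (h0 : 0 ≤ p) {s u v : Finset ℕ} (hv : v ⊆ u) (hu : u ⊆ s) :
    Pr p s (fun B => B ∩ u = v) = p ^ v.card * (1-p) ^ (u.card - v.card) := by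
  set t := s \ u with ht
  have hd : Disjoint u t := Finset.disjoint_sdiff
  have hsplit : s = u ∪ t := (Finset.union_sdiff_of_subset hu).symm
  have h1 : Pr p s (fun B => B ∩ u = v)
      = Pr p s (fun B => (fun C => C = v) (B ∩ u) ∧ (fun _ => True) (B ∩ t)) := by
    apply Pr_congr
    intro B _
    simp only [and_true]
  have hmul := Pr_mul (p := p) hd (fun C => C = v) (fun _ => True)
  rw [h1, hsplit, hmul, Pr_total, mul_one]
  unfold Pr
  rw [Finset.sum_eq_single v]
  · rw [if_pos rfl, weight_eq u v hv]
  · intro B _ hBv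
    rw [if_neg hBv]
  · intro hv'
    exact absurd (Finset.mem_powerset.mpr hv) hv'


lemma anp_eq_Pr (N : ℕ) :
    anp N p = Pr p (Finset.Icc 1 (N-1)) (fun B => N ∉ AddSubmonoid.closure (B : Set ℕ)) := by
  unfold anp Pr
  apply Finset.sum_congr rfl
  intro B hB
  by_cases h : N ∉ AddSubmonoid.closure (B : Set ℕ)
  · rw [if_pos h, if_pos h, weight_eq _ _ (Finset.mem_powerset.mp hB), Nat.card_Icc]
    congr 2
  · rw [if_neg h, if_neg h]

/-- The pair-avoiding event. -/
def EV (N a b : ℕ) (B : Finset ℕ) : Prop :=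
  ∀ i, a ≤ i → i ≤ b → 2*i ≤ N → ¬(i ∈ B ∧ N - i ∈ B)

lemma upper_aux (h0 : 0 < p) (h1 : p < 1) :
    ∀ d a b N : ℕ, 1 ≤ a → a + b = N → b + 1 - a = d →
    Pr p (Finset.Icc a b) (EV N a b)
      ≤ (1-p^2)^(d/2) * (if d % 2 = 1 then (1-p) else 1) := by
  intro d
  induction d using Nat.strong_induction_on with
  | _ d ih =>
    intro a b N ha hab hd
    have hp2 : (0:ℝ) ≤ 1 - p^2 := by nlinarith
    match d, hd with
    | 0, hd =>
      simp only [Nat.zero_div, pow_zero, one_mul, if_neg (by omega : ¬ (0:ℕ) % 2 = 1)]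
      exact Pr_le_one h0.le h1.le
    | 1, hd =>
      have hb : a = b := by omega
      subst hb
      have h2a : 2*a = N := by omega
      have hcongr : Pr p (Finset.Icc a a) (EV N a a)
          = Pr p (Finset.Icc a a) (fun B => B ∩ {a} = ∅) := by
        apply Pr_congr
        intro B hB
        constructor
        · intro hE
          have := hE a le_rfl le_rfl (by omega)
          rw [(by omega : N - a = a)] at this
          simp only [Finset.eq_empty_iff_forall_notMem, Finset.mem_inter, Finset.mem_singleton]
          rintro x ⟨hxB, rfl⟩
          exact this ⟨hxB, hxB⟩
        · intro hI i hai hia h2i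
          have hia' : i = a := le_antisymm hia hai
          subst hia'
          rintro ⟨hiB, -⟩
          have : i ∈ B ∩ {i} := Finset.mem_inter.mpr ⟨hiB, Finset.mem_singleton_self i⟩
          rw [hI] at this
          exact absurd this (Finset.notMem_empty i)
      rw [hcongr, Pr_cyl h0.le (Finset.empty_subset _) (by simp)]
      simp
    | (d+2), hd =>
      have hab' : a < b := by omega
      -- split Icc a b = Icc (a+1) (b-1) ∪ {a, b}
      have hsplit : Finset.Icc a b = Finset.Icc (a+1) (b-1) ∪ {a, b} := by
        ext i
        simp only [Finset.mem_Icc, Finset.mem_union, Finset.mem_insert, Finset.mem_singleton]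
        omega
      have hdisj : Disjoint (Finset.Icc (a+1) (b-1)) ({a, b} : Finset ℕ) := by
        simp only [Finset.disjoint_right, Finset.mem_insert, Finset.mem_singleton, Finset.mem_Icc]
        omega
      have hmono : Pr p (Finset.Icc a b) (EV N a b)
          ≤ Pr p (Finset.Icc a b) (fun B =>
              (fun C => EV N (a+1) (b-1) C) (B ∩ Finset.Icc (a+1) (b-1)) ∧
              (fun C => ¬(a ∈ C ∧ b ∈ C)) (B ∩ {a, b})) := by
        apply Pr_mono h0.le h1.le
        intro B hBs hE
        constructor
        · intro i hai hib h2i hmem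
          rw [Finset.mem_inter, Finset.mem_inter] at hmem
          exact hE i (by omega) (by omega) h2i ⟨hmem.1.1, hmem.2.1⟩
        · rintro ⟨haB, hbB⟩
          rw [Finset.mem_inter] at haB hbB
          exact hE a le_rfl (by omega) (by omega)
            ⟨haB.1, by rw [(by omega : N - a = b)]; exact hbB.1⟩
      have hmul := Pr_mul (p := p) hdisj (fun C => EV N (a+1) (b-1) C) (fun C => ¬(a ∈ C ∧ b ∈ C))
      rw [hsplit] at hmono
      rw [hmul] at hmono
      -- pair probability
      have hpair : Pr p ({a, b} : Finset ℕ) (fun C => ¬(a ∈ C ∧ b ∈ C)) = 1 - p^2 := by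
        have hcompl := Pr_compl (p := p) (s := ({a, b} : Finset ℕ)) (E := fun C => a ∈ C ∧ b ∈ C)
        have hc : Pr p ({a, b} : Finset ℕ) (fun C => a ∈ C ∧ b ∈ C)
            = Pr p ({a, b} : Finset ℕ) (fun C => C ∩ {a, b} = {a, b}) := by
          apply Pr_congr
          intro B hB
          constructor
          · rintro ⟨h1', h2'⟩
            rw [Finset.inter_eq_left.mpr hB]
            apply Finset.Subset.antisymm hB
            intro x hx
            simp only [Finset.mem_insert, Finset.mem_singleton] at hx
            rcases hx with rfl | rfl
            · exact h1'
            · exact h2'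
          · intro hI
            rw [Finset.inter_eq_left.mpr hB] at hI
            subst hI
            exact ⟨by simp, by simp⟩
        rw [hc, Pr_cyl h0.le (le_refl _) (le_refl _)] at hcompl
        rw [hcompl]
        rw [Finset.card_insert_of_notMem (by simp; omega), Finset.card_singleton]
        norm_num
      have hIH := ih d (by omega) (a+1) (b-1) N (by omega) (by omega) (by omega)
      calc Pr p (Finset.Icc a b) (EV N a b)
          ≤ Pr p (Finset.Icc (a+1) (b-1)) (fun C => EV N (a+1) (b-1) C) *
            Pr p ({a, b} : Finset ℕ) (fun C => ¬(a ∈ C ∧ b ∈ C)) := by rw [hsplit]; exact hmono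
        _ ≤ ((1-p^2)^(d/2) * (if d % 2 = 1 then (1-p) else 1)) * (1 - p^2) := by
            rw [hpair]
            apply mul_le_mul_of_nonneg_right hIH hp2
        _ = (1-p^2)^((d+2)/2) * (if (d+2) % 2 = 1 then (1-p) else 1) := by
            have : (d+2)/2 = d/2 + 1 := by omega
            rw [this, pow_succ]
            have : (d+2) % 2 = d % 2 := by omega
            rw [this]
            ring


noncomputable def V (p : ℝ) (n : ℕ) : ℝ := (1-p^2)^(n/2) * (if n % 2 = 1 then (1-p) else 1)

lemma anp_nonneg (h0 : 0 ≤ p) (h1 : p ≤ 1) (N : ℕ) : 0 ≤ anp N p := by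
  rw [anp_eq_Pr]
  exact Pr_nonneg h0 h1

lemma anp_le_V (h0 : 0 < p) (h1 : p < 1) (n : ℕ) : anp (n+1) p ≤ V p n := by
  rw [anp_eq_Pr]
  have hstep : Pr p (Finset.Icc 1 (n+1-1)) (fun B => (n+1) ∉ AddSubmonoid.closure (B : Set ℕ))
      ≤ Pr p (Finset.Icc 1 n) (EV (n+1) 1 n) := by
    apply Pr_mono h0.le h1.le
    intro B hBs hncl i h1i hin h2i
    rintro ⟨hiB, hNiB⟩
    apply hncl
    have hi : (i : ℕ) ∈ AddSubmonoid.closure (B : Set ℕ) :=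
      AddSubmonoid.subset_closure (Finset.mem_coe.mpr hiB)
    have hni : (n+1-i : ℕ) ∈ AddSubmonoid.closure (B : Set ℕ) :=
      AddSubmonoid.subset_closure (Finset.mem_coe.mpr hNiB)
    have := AddSubmonoid.add_mem _ hi hni
    rwa [(by omega : i + (n+1-i) = n+1)] at this
  refine hstep.trans ?_
  exact upper_aux h0 h1 n 1 n (n+1) le_rfl (by omega) (by omega)

lemma hasSum_V (h0 : 0 < p) (h1 : p < 1) :
    HasSum (V p) ((1-(1-p^2))⁻¹ + (1-p) * (1-(1-p^2))⁻¹) := by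
  have hr0 : (0:ℝ) ≤ 1 - p^2 := by nlinarith
  have hr1 : 1 - p^2 < 1 := by nlinarith
  apply HasSum.even_add_odd
  · have : (fun k => V p (2*k)) = fun k => (1-p^2)^k := by
      funext k
      unfold V
      rw [if_neg (by omega : ¬ (2*k) % 2 = 1), mul_one, (by omega : 2*k/2 = k)]
    rw [this]
    exact hasSum_geometric_of_lt_one hr0 hr1
  · have : (fun k => V p (2*k+1)) = fun k => (1-p^2)^k * (1-p) := by
      funext k
      unfold V
      rw [if_pos (by omega : (2*k+1) % 2 = 1), (by omega : (2*k+1)/2 = k)]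
    rw [this]
    rw [mul_comm]
    exact (hasSum_geometric_of_lt_one hr0 hr1).mul_right (1-p)


lemma notin_closure_empty_low (N : ℕ) (hN : 1 ≤ N) (B : Finset ℕ)
    (hB : ∀ b ∈ B, N < 2*b ∧ b ≠ N) : N ∉ AddSubmonoid.closure (B : Set ℕ) := by
  set T : AddSubmonoid ℕ :=
    { carrier := {x | x = 0 ∨ (N < 2*x ∧ x ≠ N)}
      zero_mem' := Or.inl rfl
      add_mem' := by
        rintro x y hx hy
        simp only [Set.mem_setOf_eq] at *
        omega } with hT
  have hsub : AddSubmonoid.closure (B : Set ℕ) ≤ T := by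
    rw [AddSubmonoid.closure_le]
    intro b hb
    have := hB b (Finset.mem_coe.mp hb)
    exact Or.inr this
  intro hmem
  have : N ∈ T := hsub hmem
  simp only [hT, AddSubmonoid.mem_mk, AddSubsemigroup.mem_mk, Set.mem_setOf_eq] at this
  omega

lemma notin_closure_single (N a : ℕ) (ha1 : 1 ≤ a) (ha2 : 2*a < N) (ha4 : N < 4*a)
    (ha3 : 3*a ≠ N) (B : Finset ℕ)
    (hB : ∀ b ∈ B, b = a ∨ (N < 2*b ∧ b ≠ N ∧ b + a ≠ N)) :
    N ∉ AddSubmonoid.closure (B : Set ℕ) := by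
  set T : AddSubmonoid ℕ :=
    { carrier := {x | x = 0 ∨ x = a ∨ x = 2*a ∨ (N < 2*x ∧ x ≠ N ∧ x + a ≠ N)}
      zero_mem' := Or.inl rfl
      add_mem' := by
        rintro x y hx hy
        simp only [Set.mem_setOf_eq] at *
        omega } with hT
  have hsub : AddSubmonoid.closure (B : Set ℕ) ≤ T := by
    rw [AddSubmonoid.closure_le]
    intro b hb
    rcases hB b (Finset.mem_coe.mp hb) with h | h
    · exact Or.inr (Or.inl h)
    · exact Or.inr (Or.inr (Or.inr h))
  intro hmem
  have : N ∈ T := hsub hmem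
  simp only [hT, AddSubmonoid.mem_mk, AddSubsemigroup.mem_mk, Set.mem_setOf_eq] at this
  omega

/-- admissible generators for the single-small-element events -/
def Gset (N : ℕ) : Finset ℕ := (Finset.Icc 1 (N/2)).filter (fun a => N < 4*a ∧ ¬ a ∣ N)

lemma card_Gset (N : ℕ) :
    N/2 ≤ (Gset N).card + (if 2 ∣ N then 1 else 0) + (if 3 ∣ N then 1 else 0) + N/4 := by
  set I := Finset.Icc (N/4+1) (N/2) with hI
  have h1 : I.filter (fun a => ¬ a ∣ N) ⊆ Gset N := by
    intro a ha
    simp only [Finset.mem_filter, Finset.mem_Icc, hI, Gset] at *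
    omega
  have h2 : I.filter (fun a => a ∣ N) ⊆
      (if 2 ∣ N then ({N/2} : Finset ℕ) else ∅) ∪ (if 3 ∣ N then ({N/3} : Finset ℕ) else ∅) := by
    intro a ha
    simp only [Finset.mem_filter, Finset.mem_Icc, hI] at ha
    obtain ⟨⟨ha1, ha2⟩, k, hk⟩ := ha
    have ha0 : 0 < a := by omega
    have hk2 : 2 ≤ k := by
      by_contra h
      have : a * k ≤ a * 1 := Nat.mul_le_mul_left a (by omega)
      omega
    have hk4 : k ≤ 3 := by
      by_contra h
      have : a * 4 ≤ a * k := Nat.mul_le_mul_left a (by omega)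
      omega
    rcases (by omega : k = 2 ∨ k = 3) with rfl | rfl
    · have h2N : 2 ∣ N := ⟨a, by omega⟩
      rw [Finset.mem_union, if_pos h2N]
      exact Or.inl (Finset.mem_singleton.mpr (by omega))
    · have h3N : 3 ∣ N := ⟨a, by omega⟩
      rw [Finset.mem_union, if_pos h3N]
      exact Or.inr (Finset.mem_singleton.mpr (by omega))
  have hIcard : I.card = N/2 - N/4 := by
    rw [hI, Nat.card_Icc]
    omega
  have hsplit := Finset.card_filter_add_card_filter_not
    (s := I) (p := (· ∣ N))
  have hc2 : (I.filter (· ∣ N)).card ≤ (if 2 ∣ N then 1 else 0) + (if 3 ∣ N then 1 else 0) := by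
    refine le_trans (Finset.card_le_card h2) (le_trans (Finset.card_union_le _ _) ?_)
    gcongr <;> split_ifs <;> simp
  have hc1 : (I.filter (fun a => ¬ a ∣ N)).card ≤ (Gset N).card := Finset.card_le_card h1
  omega


lemma ite_inst {c : Prop} {i1 i2 : Decidable c} (x y : ℝ) : @ite ℝ c i1 x y = @ite ℝ c i2 x y := by
  by_cases h : c
  · rw [if_pos h, if_pos h]
  · rw [if_neg h, if_neg h]

lemma anp_ge (h0 : 0 < p) (h1 : p < 1) (N : ℕ) (hN : 1 ≤ N) :
    (1-p)^(N/2) + (Gset N).card * (p * (1-p)^(N/2)) ≤ anp N p := by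
  rw [anp_eq_Pr]
  set s := Finset.Icc 1 (N-1) with hs
  set m := N/2 with hm
  set u0 : Finset ℕ := Finset.Icc 1 m with hu0
  have hu0s : u0 ⊆ s := by
    rw [hu0, hs]
    apply Finset.Icc_subset_Icc le_rfl
    omega
  -- facts about members of Gset
  have hGfacts : ∀ a ∈ Gset N, 1 ≤ a ∧ a ≤ m ∧ N < 4*a ∧ 2*a < N ∧ 3*a ≠ N ∧ m < N - a ∧ N - a ≤ N-1 := by
    intro a ha
    simp only [Gset, Finset.mem_filter, Finset.mem_Icc] at ha
    obtain ⟨⟨ha1, ham⟩, ha4, hadvd⟩ := ha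
    have h2a : 2*a ≠ N := fun h => hadvd ⟨2, by omega⟩
    have h3a : 3*a ≠ N := fun h => hadvd ⟨3, by omega⟩
    refine ⟨ha1, ham, ha4, by omega, h3a, ?_, by omega⟩
    -- m < N - a
    rcases Nat.even_or_odd N with ⟨t, ht⟩ | ⟨t, ht⟩ <;> omega
  -- the cylinder sets
  set ua : ℕ → Finset ℕ := fun a => insert (N-a) u0 with hua
  have huas : ∀ a ∈ Gset N, ua a ⊆ s := by
    intro a ha
    obtain ⟨h1a, ham, -, -, -, hma, haN⟩ := hGfacts a ha
    rw [hua]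
    intro x hx
    rcases Finset.mem_insert.mp hx with rfl | hx
    · rw [hs]; simp only [Finset.mem_Icc]; omega
    · exact hu0s hx
  have hNa_notmem : ∀ a ∈ Gset N, N - a ∉ u0 := by
    intro a ha
    obtain ⟨h1a, ham, -, -, -, hma, haN⟩ := hGfacts a ha
    rw [hu0]
    simp only [Finset.mem_Icc]
    omega
  have hcard_ua : ∀ a ∈ Gset N, (ua a).card = m + 1 := by
    intro a ha
    rw [hua, Finset.card_insert_of_notMem (hNa_notmem a ha), hu0, Nat.card_Icc]
    omega
  -- probabilities of the elementary events
  have hPr0 : Pr p s (fun B => B ∩ u0 = ∅) = (1-p)^m := by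
    rw [Pr_cyl h0.le (Finset.empty_subset u0) hu0s]
    simp [hu0, Nat.card_Icc]
  have hPra : ∀ a ∈ Gset N, Pr p s (fun B => B ∩ ua a = {a}) = p * (1-p)^m := by
    intro a ha
    obtain ⟨h1a, ham, -, -, -, hma, haN⟩ := hGfacts a ha
    have hvu : ({a} : Finset ℕ) ⊆ ua a := by
      intro x hx
      rw [Finset.mem_singleton.mp hx, hua]
      apply Finset.mem_insert_of_mem
      rw [hu0]; simp only [Finset.mem_Icc]; omega
    rw [Pr_cyl h0.le hvu (huas a ha), hcard_ua a ha]
    simp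
  -- pointwise key inequality
  have key : ∀ B ∈ s.powerset,
      (if B ∩ u0 = ∅ then (∏ i ∈ s, if i ∈ B then p else 1-p) else 0)
      + ∑ a ∈ Gset N, (if B ∩ ua a = {a} then (∏ i ∈ s, if i ∈ B then p else 1-p) else 0)
      ≤ (if N ∉ AddSubmonoid.closure (B : Set ℕ) then (∏ i ∈ s, if i ∈ B then p else 1-p) else 0) := by
    intro B hB
    rw [Finset.mem_powerset] at hB
    set w := ∏ i ∈ s, if i ∈ B then p else 1-p with hw
    have hw0 : 0 ≤ w := weight_nonneg h0.le h1.le s B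
    -- helper : F_a B → B ∩ u0 = {a}
    have hFa_u0 : ∀ a ∈ Gset N, B ∩ ua a = {a} → B ∩ u0 = {a} := by
      intro a ha hFa
      obtain ⟨h1a, ham, -, -, -, hma, haN⟩ := hGfacts a ha
      ext x
      have hx := Finset.ext_iff.mp hFa x
      simp only [Finset.mem_inter, hua, Finset.mem_insert, hu0, Finset.mem_Icc,
        Finset.mem_singleton] at hx ⊢
      constructor
      · rintro ⟨hxB, hx1, hxm⟩
        exact hx.mp ⟨hxB, Or.inr ⟨hx1, hxm⟩⟩
      · rintro rfl
        obtain ⟨hxB, -⟩ := hx.mpr rfl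
        exact ⟨hxB, h1a, ham⟩
    by_cases hE0 : B ∩ u0 = ∅
    · rw [if_pos hE0]
      have hz : ∑ a ∈ Gset N, (if B ∩ ua a = {a} then w else 0) = 0 := by
        apply Finset.sum_eq_zero
        intro a ha
        rw [if_neg]
        intro hFa
        have := hFa_u0 a ha hFa
        rw [hE0] at this
        exact absurd this.symm (Finset.singleton_ne_empty a)
      rw [hz, add_zero, if_pos]
      apply notin_closure_empty_low N hN
      intro b hb
      have hbs := hB hb
      rw [hs] at hbs
      simp only [Finset.mem_Icc] at hbs
      have hbu0 : b ∉ u0 := by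
        intro hbu
        have : b ∈ B ∩ u0 := Finset.mem_inter.mpr ⟨hb, hbu⟩
        rw [hE0] at this
        exact absurd this (Finset.notMem_empty b)
      rw [hu0] at hbu0
      simp only [Finset.mem_Icc] at hbu0
      constructor
      · omega
      · omega
    · rw [if_neg hE0, zero_add]
      by_cases hex : ∃ a ∈ Gset N, B ∩ ua a = {a}
      · obtain ⟨a₀, ha₀G, ha₀⟩ := hex
        have hB0 : B ∩ u0 = {a₀} := hFa_u0 a₀ ha₀G ha₀
        rw [Finset.sum_eq_single_of_mem a₀ ha₀G]
        · rw [if_pos ha₀, if_pos]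
          obtain ⟨h1a, ham, ha4, ha2, ha3, hma, haN⟩ := hGfacts a₀ ha₀G
          apply notin_closure_single N a₀ h1a ha2 ha4 ha3
          intro b hb
          by_cases hba : b = a₀
          · exact Or.inl hba
          · right
            have hbua : b ∉ ua a₀ := by
              intro hbu
              have : b ∈ B ∩ ua a₀ := Finset.mem_inter.mpr ⟨hb, hbu⟩
              rw [ha₀, Finset.mem_singleton] at this
              exact hba this
            have hbs := hB hb
            rw [hs] at hbs
            simp only [Finset.mem_Icc] at hbs
            rw [hua, Finset.mem_insert, hu0, Finset.mem_Icc] at hbua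
            push_neg at hbua
            obtain ⟨hbNa, hbIcc⟩ := hbua
            refine ⟨by omega, by omega, by omega⟩
        · intro a haG hne
          rw [if_neg]
          intro hFa
          have := hFa_u0 a haG hFa
          rw [hB0] at this
          exact hne (Finset.singleton_injective this.symm)
      · push_neg at hex
        have hz : ∑ a ∈ Gset N, (if B ∩ ua a = {a} then w else 0) = 0 :=
          Finset.sum_eq_zero (fun a ha => if_neg (hex a ha))
        rw [hz]
        split
        · exact hw0
        · exact le_refl 0
  -- sum the pointwise inequality
  have hsum := Finset.sum_le_sum key
  rw [Finset.sum_add_distrib] at hsum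
  rw [Finset.sum_comm] at hsum
  have hrw : ∀ a ∈ Gset N,
      ∑ B ∈ s.powerset, (if B ∩ ua a = {a} then (∏ i ∈ s, if i ∈ B then p else 1-p) else 0)
        = p * (1-p)^m := by
    intro a ha
    refine Eq.trans ?_ (hPra a ha)
    unfold Pr
    exact Finset.sum_congr rfl (fun B _ => ite_inst _ _)
  rw [Finset.sum_congr rfl hrw] at hsum
  rw [Finset.sum_const, nsmul_eq_mul] at hsum
  calc (1-p)^(N/2) + (Gset N).card * (p * (1-p)^(N/2))
      = Pr p s (fun B => B ∩ u0 = ∅) + (Gset N).card * (p * (1-p)^m) := by rw [hPr0]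
    _ = (∑ B ∈ s.powerset, (if B ∩ u0 = ∅ then (∏ i ∈ s, if i ∈ B then p else 1-p) else 0))
          + (Gset N).card * (p * (1-p)^m) := by
            unfold Pr
            congr 1
            exact Finset.sum_congr rfl (fun B _ => ite_inst _ _)
    _ ≤ ∑ B ∈ s.powerset, (if N ∉ AddSubmonoid.closure (B : Set ℕ)
          then (∏ i ∈ s, if i ∈ B then p else 1-p) else 0) := hsum
    _ = Pr p s (fun B => N ∉ AddSubmonoid.closure (B : Set ℕ)) := by
          unfold Pr
          exact Finset.sum_congr rfl (fun B _ => ite_inst _ _)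


noncomputable def lowb (p : ℝ) (n : ℕ) : ℝ :=
  (1-p)^((n+1)/2) + p * (1-p)^((n+1)/2) *
    ((((n+1)/2 : ℕ) : ℝ) - (((n+1)/4 : ℕ) : ℝ)
      - (if 2 ∣ (n+1) then 1 else 0) - (if 3 ∣ (n+1) then 1 else 0))

lemma lowb_le_anp (h0 : 0 < p) (h1 : p < 1) (n : ℕ) : lowb p n ≤ anp (n+1) p := by
  refine le_trans ?_ (anp_ge h0 h1 (n+1) (by omega))
  unfold lowb
  set N := n+1 with hN
  have hq : (0:ℝ) ≤ (1-p)^(N/2) := pow_nonneg (by linarith) _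
  have hcnt := card_Gset N
  have hreal : (((N/2 : ℕ)):ℝ) - ((N/4 : ℕ):ℝ) - (if 2 ∣ N then (1:ℝ) else 0)
      - (if 3 ∣ N then (1:ℝ) else 0) ≤ ((Gset N).card : ℝ) := by
    have h2 : (if 2 ∣ N then (1:ℝ) else 0) = (((if 2 ∣ N then 1 else 0) : ℕ) : ℝ) := by
      split_ifs <;> simp
    have h3 : (if 3 ∣ N then (1:ℝ) else 0) = (((if 3 ∣ N then 1 else 0) : ℕ) : ℝ) := by
      split_ifs <;> simp
    rw [h2, h3]
    have := hcnt
    have hcast : ((N/2 : ℕ) : ℝ) ≤ ((Gset N).card : ℝ) + (((if 2 ∣ N then 1 else 0) : ℕ) : ℝ)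
        + (((if 3 ∣ N then 1 else 0) : ℕ) : ℝ) + ((N/4 : ℕ) : ℝ) := by
      exact_mod_cast this
    linarith
  have hfac : (0:ℝ) ≤ p * (1-p)^(N/2) := mul_nonneg h0.le hq
  nlinarith [mul_le_mul_of_nonneg_left hreal hfac]


noncomputable def Tval (p : ℝ) : ℝ :=
  ((1-(1-p))⁻¹ + (1-p) * (1-(1-p))⁻¹)
  + p * ((((1-p)^2/(1-(1-p)^2)^2
        + (1-p) * ((1-p)^2/(1-(1-p)^2)^2 + (1-(1-p)^2)⁻¹)))
       + (((1-p) * ((1-p)^2/(1-(1-p)^2)^2 + (1-(1-p)^2)⁻¹)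
        + (1-p)^2 * ((1-p)^2/(1-(1-p)^2)^2 + (1-(1-p)^2)⁻¹))))
  - p * (0 + (1-p) * (1-(1-p))⁻¹)
  - p * ((1-p) * (1-(1-p)^3)⁻¹ + (1-p)^3 * (1-(1-p)^3)⁻¹)

lemma hasSum_lowb (h0 : 0 < p) (h1 : p < 1) : HasSum (lowb p) (Tval p) := by
  have hq0 : (0:ℝ) < 1-p := by linarith
  have hq1 : (1:ℝ)-p < 1 := by linarith
  have hx0 : (0:ℝ) ≤ (1-p)^2 := sq_nonneg _
  have hx1 : (1-p)^2 < 1 := by nlinarith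
  have hx1' : ‖(1-p)^2‖ < 1 := by rw [Real.norm_eq_abs, abs_of_nonneg hx0]; exact hx1
  have hc0 : (0:ℝ) ≤ (1-p)^3 := by positivity
  have hc1 : (1-p)^3 < 1 := by nlinarith
  have geo2 : HasSum (fun j : ℕ => ((1-p)^2)^j) (1-(1-p)^2)⁻¹ :=
    hasSum_geometric_of_lt_one hx0 hx1
  have geoc : HasSum (fun j : ℕ => ((j:ℝ)) * ((1-p)^2)^j) ((1-p)^2/(1-(1-p)^2)^2) :=
    hasSum_coe_mul_geometric_of_norm_lt_one hx1'
  have geo1 : HasSum (fun j : ℕ => (1-p)^j) (1-(1-p))⁻¹ :=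
    hasSum_geometric_of_lt_one hq0.le hq1
  have geo3 : HasSum (fun j : ℕ => ((1-p)^3)^j) (1-(1-p)^3)⁻¹ :=
    hasSum_geometric_of_lt_one hc0 hc1
  -- the four component sequences
  set u : ℕ → ℝ := fun n => (1-p)^((n+1)/2) with hu
  set v : ℕ → ℝ := fun n => ((((n+1)/2 : ℕ) : ℝ) - (((n+1)/4 : ℕ) : ℝ)) * (1-p)^((n+1)/2) with hv
  set w : ℕ → ℝ := fun n => (if 2 ∣ (n+1) then (1:ℝ) else 0) * (1-p)^((n+1)/2) with hw
  set z : ℕ → ℝ := fun n => (if 3 ∣ (n+1) then (1:ℝ) else 0) * (1-p)^((n+1)/2) with hz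
  have Hu : HasSum u ((1-(1-p))⁻¹ + (1-p) * (1-(1-p))⁻¹) := by
    apply HasSum.even_add_odd
    · have e : (fun k => u (2*k)) = fun k => (1-p)^k := by
        funext k
        show (1-p)^((2*k+1)/2) = (1-p)^k
        congr 1
        omega
      rw [e]; exact geo1
    · have e : (fun k => u (2*k+1)) = fun k => (1-p) * (1-p)^k := by
        funext k
        show (1-p)^((2*k+1+1)/2) = (1-p) * (1-p)^k
        rw [(by omega : (2*k+1+1)/2 = k+1), pow_succ]
        ring
      rw [e]; exact geo1.mul_left (1-p)
  have HXY := geoc.add geo2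
  have Hv : HasSum v
      ((((1-p)^2/(1-(1-p)^2)^2
        + (1-p) * ((1-p)^2/(1-(1-p)^2)^2 + (1-(1-p)^2)⁻¹)))
       + (((1-p) * ((1-p)^2/(1-(1-p)^2)^2 + (1-(1-p)^2)⁻¹)
        + (1-p)^2 * ((1-p)^2/(1-(1-p)^2)^2 + (1-(1-p)^2)⁻¹)))) := by
    apply HasSum.even_add_odd
    · apply HasSum.even_add_odd
      · have e : (fun j => v (2*(2*j))) = fun j : ℕ => ((j:ℝ)) * ((1-p)^2)^j := by
          funext j
          show ((((2*(2*j)+1)/2 : ℕ) : ℝ) - (((2*(2*j)+1)/4 : ℕ) : ℝ)) * (1-p)^((2*(2*j)+1)/2)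
            = ((j:ℝ)) * ((1-p)^2)^j
          rw [(by omega : (2*(2*j)+1)/2 = 2*j), (by omega : (2*(2*j)+1)/4 = j), pow_mul]
          push_cast
          ring
        rw [e]; exact geoc
      · have e : (fun j => v (2*(2*j+1))) = fun j : ℕ => (1-p) * ((j:ℝ) * ((1-p)^2)^j + ((1-p)^2)^j) := by
          funext j
          show ((((2*(2*j+1)+1)/2 : ℕ) : ℝ) - (((2*(2*j+1)+1)/4 : ℕ) : ℝ)) * (1-p)^((2*(2*j+1)+1)/2)
            = _
          rw [(by omega : (2*(2*j+1)+1)/2 = 2*j+1), (by omega : (2*(2*j+1)+1)/4 = j),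
            pow_succ, pow_mul]
          push_cast
          ring
        rw [e]; exact HXY.mul_left (1-p)
    · apply HasSum.even_add_odd
      · have e : (fun j => v (2*(2*j)+1)) = fun j : ℕ => (1-p) * ((j:ℝ) * ((1-p)^2)^j + ((1-p)^2)^j) := by
          funext j
          show ((((2*(2*j)+1+1)/2 : ℕ) : ℝ) - (((2*(2*j)+1+1)/4 : ℕ) : ℝ)) * (1-p)^((2*(2*j)+1+1)/2)
            = _
          rw [(by omega : (2*(2*j)+1+1)/2 = 2*j+1), (by omega : (2*(2*j)+1+1)/4 = j),
            pow_succ, pow_mul]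
          push_cast
          ring
        rw [e]; exact HXY.mul_left (1-p)
      · have e : (fun j => v (2*(2*j+1)+1)) = fun j : ℕ => (1-p)^2 * ((j:ℝ) * ((1-p)^2)^j + ((1-p)^2)^j) := by
          funext j
          show ((((2*(2*j+1)+1+1)/2 : ℕ) : ℝ) - (((2*(2*j+1)+1+1)/4 : ℕ) : ℝ)) * (1-p)^((2*(2*j+1)+1+1)/2)
            = _
          rw [(by omega : (2*(2*j+1)+1+1)/2 = 2*j+2), (by omega : (2*(2*j+1)+1+1)/4 = j+1)]
          have : (1-p)^(2*j+2) = (1-p)^2 * ((1-p)^2)^j := by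
            rw [← pow_mul]
            ring
          rw [this]
          push_cast
          ring
        rw [e]; exact HXY.mul_left ((1-p)^2)
  have Hw : HasSum w (0 + (1-p) * (1-(1-p))⁻¹) := by
    apply HasSum.even_add_odd
    · have e : (fun k => w (2*k)) = fun _ => (0:ℝ) := by
        funext k
        show (if 2 ∣ (2*k+1) then (1:ℝ) else 0) * (1-p)^((2*k+1)/2) = 0
        rw [if_neg (by omega), zero_mul]
      rw [e]; exact hasSum_zero
    · have e : (fun k => w (2*k+1)) = fun k => (1-p) * (1-p)^k := by
        funext k
        show (if 2 ∣ (2*k+1+1) then (1:ℝ) else 0) * (1-p)^((2*k+1+1)/2) = _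
        rw [if_pos (by omega), one_mul, (by omega : (2*k+1+1)/2 = k+1), pow_succ]
        ring
      rw [e]; exact geo1.mul_left (1-p)
  have Hz : HasSum z ((1-p) * (1-(1-p)^3)⁻¹ + (1-p)^3 * (1-(1-p)^3)⁻¹) := by
    have hinj : Function.Injective (fun j : ℕ => 3*j+2) := by
      intro a b hab
      dsimp only at hab
      omega
    have hvan : ∀ x ∉ Set.range (fun j : ℕ => 3*j+2), z x = 0 := by
      intro x hx
      have hnd : ¬ (3 ∣ (x+1)) := by
        rintro ⟨c, hc⟩
        exact hx ⟨c-1, by show 3*(c-1)+2 = x; omega⟩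
      show (if 3 ∣ (x+1) then (1:ℝ) else 0) * (1-p)^((x+1)/2) = 0
      rw [if_neg hnd, zero_mul]
    refine (Function.Injective.hasSum_iff hinj hvan).mp ?_
    apply HasSum.even_add_odd
    · have e : (fun i => (z ∘ (fun j : ℕ => 3*j+2)) (2*i)) = fun i => (1-p) * ((1-p)^3)^i := by
        funext i
        show (if 3 ∣ (3*(2*i)+2+1) then (1:ℝ) else 0) * (1-p)^((3*(2*i)+2+1)/2) = _
        rw [if_pos (by omega), one_mul, (by omega : (3*(2*i)+2+1)/2 = 3*i+1), ← pow_mul]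
        rw [(by ring : (1-p) * (1-p)^(3*i) = (1-p)^(3*i) * (1-p)), ← pow_succ]
      rw [e]; exact geo3.mul_left (1-p)
    · have e : (fun i => (z ∘ (fun j : ℕ => 3*j+2)) (2*i+1)) = fun i => (1-p)^3 * ((1-p)^3)^i := by
        funext i
        show (if 3 ∣ (3*(2*i+1)+2+1) then (1:ℝ) else 0) * (1-p)^((3*(2*i+1)+2+1)/2) = _
        rw [if_pos (by omega), one_mul, (by omega : (3*(2*i+1)+2+1)/2 = 3*i+3), ← pow_mul]
        rw [← pow_add]
        congr 1
        omega
      rw [e]; exact geo3.mul_left ((1-p)^3)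
  have Hcomb := ((Hu.add (Hv.mul_left p)).sub (Hw.mul_left p)).sub (Hz.mul_left p)
  have hfun : (fun n => u n + p * v n - p * w n - p * z n) = lowb p := by
    funext n
    show (1-p)^((n+1)/2) + p * (((((n+1)/2 : ℕ) : ℝ) - (((n+1)/4 : ℕ) : ℝ)) * (1-p)^((n+1)/2))
        - p * ((if 2 ∣ (n+1) then (1:ℝ) else 0) * (1-p)^((n+1)/2))
        - p * ((if 3 ∣ (n+1) then (1:ℝ) else 0) * (1-p)^((n+1)/2)) = lowb p n
    unfold lowb
    ring
  rw [hfun] at Hcomb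
  exact Hcomb

example : True := trivial

theorem statement16 (p : ℝ) (hp : p ∈ Set.Ioo (0 : ℝ) 1) :
    ∃ L : ℝ, HasSum (fun n : ℕ => anp (n + 1) p) L ∧
      (6 - 8 * p + 3 * p ^ 2) / (2 * p - 2 * p ^ 3 + p ^ 4) ≤ L ∧
      L ≤ (2 - p ^ 2) / p ^ 2 := by
  obtain ⟨hp0, hp1⟩ := hp
  have hV := hasSum_V hp0 hp1
  have hanonneg : ∀ n : ℕ, 0 ≤ anp (n+1) p := fun n => anp_nonneg hp0.le hp1.le (n+1)
  have hle : ∀ n : ℕ, anp (n+1) p ≤ V p n := anp_le_V hp0 hp1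
  have hsumm : Summable (fun n : ℕ => anp (n+1) p) :=
    Summable.of_nonneg_of_le hanonneg hle hV.summable
  refine ⟨∑' n, anp (n+1) p, hsumm.hasSum, ?_, ?_⟩
  · -- lower bound
    have hlb := hasSum_lowb hp0 hp1
    have h1 : Tval p ≤ ∑' n, anp (n+1) p := by
      rw [← hlb.tsum_eq]
      exact Summable.tsum_le_tsum (fun n => lowb_le_anp hp0 hp1 n) hlb.summable hsumm
    refine le_trans ?_ h1
    have hd' : (0:ℝ) < 2 - 2*p^2 + p^3 := by nlinarith [pow_pos hp0 3, sq_nonneg (1-p)]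
    have hd : (0:ℝ) < 2*p - 2*p^3 + p^4 := by nlinarith [mul_pos hp0 hd']
    have hq0 : (0:ℝ) < 1-p := by linarith
    have h2p : (0:ℝ) < 1-(1-p)^2 := by nlinarith
    have h3p : (0:ℝ) < 1-(1-p)^3 := by nlinarith
    have key : Tval p - (6 - 8*p + 3*p^2) / (2*p - 2*p^3 + p^4)
        = ((1-p)^3 * p^5 * (1 + 3*(1-p) + 5*(1-p)^2 + 5*(1-p)^3 + 4*(1-p)^4 + 2*(1-p)^5))
          / ((p^4 * (2-p)^2 * (3 - 3*p + p^2)) * (2*p - 2*p^3 + p^4)) := by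
      unfold Tval
      rw [(by ring : (1:ℝ)-(1-p) = p)]
      have e2 : (1:ℝ)-(1-p)^2 = p*(2-p) := by ring
      have e3 : (1:ℝ)-(1-p)^3 = p*(3-3*p+p^2) := by ring
      rw [e2, e3]
      have hne1 : p ≠ 0 := ne_of_gt hp0
      have hne2 : (2:ℝ)-p ≠ 0 := by nlinarith
      have hne3 : (3:ℝ)-3*p+p^2 ≠ 0 := by nlinarith
      have hne4 : 2*p - 2*p^3 + p^4 ≠ 0 := ne_of_gt hd
      have hne6 : (1-p)*3+p^2 ≠ 0 := by nlinarith
      have hne7 : 2*(1-p^2)+p^3 ≠ 0 := by nlinarith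
      field_simp
      ring
    have hpos : (0:ℝ) ≤ ((1-p)^3 * p^5 * (1 + 3*(1-p) + 5*(1-p)^2 + 5*(1-p)^3 + 4*(1-p)^4 + 2*(1-p)^5))
          / ((p^4 * (2-p)^2 * (3 - 3*p + p^2)) * (2*p - 2*p^3 + p^4)) := by
      apply div_nonneg
      · have t1 : (0:ℝ) ≤ (1-p)^3 := pow_nonneg hq0.le 3
        have t2 : (0:ℝ) ≤ p^5 := by positivity
        have t3 : (0:ℝ) ≤ 1 + 3*(1-p) + 5*(1-p)^2 + 5*(1-p)^3 + 4*(1-p)^4 + 2*(1-p)^5 := by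
          have := pow_nonneg hq0.le 2
          have := pow_nonneg hq0.le 3
          have := pow_nonneg hq0.le 4
          have := pow_nonneg hq0.le 5
          nlinarith
        positivity
      · have t4 : (0:ℝ) < 3 - 3*p + p^2 := by nlinarith
        have t5 : (0:ℝ) < (2-p)^2 := by nlinarith
        have t6 : (0:ℝ) < p^4 := by positivity
        positivity
    linarith
  · -- upper bound
    have h2 : ∑' n, anp (n+1) p ≤ (1-(1-p^2))⁻¹ + (1-p) * (1-(1-p^2))⁻¹ := by
      rw [← hV.tsum_eq]
      exact Summable.tsum_le_tsum hle hsumm hV.summable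
    refine le_trans h2 ?_
    have hp2 : (0:ℝ) < p^2 := by positivity
    have e : (1:ℝ)-(1-p^2) = p^2 := by ring
    rw [e]
    have e2 : (p^2)⁻¹ + (1-p) * (p^2)⁻¹ = (2-p)/p^2 := by
      field_simp
      ring
    rw [e2]
    rw [div_le_div_iff₀ hp2 hp2]
    have h' : (0:ℝ) ≤ (p - p^2) * p^2 := mul_nonneg (by nlinarith) hp2.le
    nlinarith
end

section
/- Let n ≥ 2 and let T be a numerical semigroup with n ∉ T all of whose minimal generators are strictly less than n/2. Let B = {s ∈ ℕ : n/2 < s < n, s ∉ T, and n − s ∉ T}. Then S = T ∪ B ∪ {m ∈ ℕ : m > n} is an irreducible numerical semigroup with Frobenius number n. -/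
open Filter Topology
open scoped Classical BigOperators

theorem statement18 (n : ℕ) (hn : 2 ≤ n) (T : AddSubmonoid ℕ) (hnT : n ∉ T)
    (hgen : ∀ a ∈ minGens T, 2 * a < n) :
    ∃ S : AddSubmonoid ℕ,
      (S : Set ℕ) = (T : Set ℕ)
          ∪ {s : ℕ | n < 2 * s ∧ s < n ∧ s ∉ T ∧ n - s ∉ T}
          ∪ {m : ℕ | n < m} ∧
      IsIrred S ∧ frob S = n := by
  set B : Set ℕ := {s : ℕ | n < 2 * s ∧ s < n ∧ s ∉ T ∧ n - s ∉ T} with hB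
  set C : Set ℕ := (T : Set ℕ) ∪ B ∪ {m : ℕ | n < m} with hC
  have hTB : ∀ t ∈ T, ∀ b ∈ B, t + b ∈ C := by
    intro t ht b hb
    obtain ⟨h1, h2, h3, h4⟩ := hb
    rcases lt_or_ge n (t + b) with h | h
    · exact Or.inr h
    · have htbn : t + b ≠ n := by
        intro he
        apply h4
        have he' : n - b = t := by omega
        rw [he']; exact ht
      by_cases htb : t + b ∈ T
      · exact Or.inl (Or.inl htb)
      · refine Or.inl (Or.inr ⟨by omega, by omega, htb, ?_⟩)
        intro hmem
        have hmem2 : (n - (t + b)) + t ∈ T := T.add_mem hmem ht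
        have he : (n - (t + b)) + t = n - b := by omega
        rw [he] at hmem2
        exact h4 hmem2
  have hadd : ∀ a b : ℕ, a ∈ C → b ∈ C → a + b ∈ C := by
    intro a b ha hb
    rcases ha with (ha | ha) | ha
    · rcases hb with (hb | hb) | hb
      · exact Or.inl (Or.inl (T.add_mem ha hb))
      · exact hTB a ha b hb
      · exact Or.inr (by simp only [Set.mem_setOf_eq] at hb ⊢; omega)
    · rcases hb with (hb | hb) | hb
      · rw [add_comm]; exact hTB b hb a ha
      · refine Or.inr ?_
        obtain ⟨h1, _, _, _⟩ := ha
        obtain ⟨h1', _, _, _⟩ := hb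
        show n < a + b
        omega
      · exact Or.inr (by simp only [Set.mem_setOf_eq] at hb ⊢; omega)
    · exact Or.inr (by simp only [Set.mem_setOf_eq] at ha ⊢; omega)
  have hnC : n ∉ C := by
    rintro ((h | h) | h)
    · exact hnT h
    · obtain ⟨_, h2, _, _⟩ := h; omega
    · simp only [Set.mem_setOf_eq] at h; omega
  have key : ∀ S : AddSubmonoid ℕ, (S : Set ℕ) = C → IsIrred S ∧ frob S = n := by
    intro S hSC
    have hmemS : ∀ x : ℕ, x ∈ S ↔ x ∈ C := by
      intro x
      rw [← SetLike.mem_coe, hSC]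
    have hnS : n ∉ S := fun h => hnC ((hmemS n).mp h)
    have hgap : gapSet S ⊆ Set.Iic n := by
      intro x hx
      simp only [Set.mem_Iic]
      by_contra hxn
      exact hx ((hmemS x).mpr (Or.inr (by show n < x; omega)))
    have hbdd : BddAbove (gapSet S) := ⟨n, fun x hx => hgap hx⟩
    have hfrob : frob S = n :=
      le_antisymm (csSup_le ⟨n, hnS⟩ fun x hx => hgap hx) (le_csSup hbdd hnS)
    refine ⟨⟨?_, ?_, ?_⟩, hfrob⟩
    · exact (Set.finite_Iic n).subset hgap
    · intro htop
      apply hnS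
      rw [htop]
      trivial
    · intro U hSU hfU
      rw [hfrob] at hfU
      have hnU : n ∉ U := by
        intro hnUmem
        rcases Set.eq_empty_or_nonempty (gapSet U) with he | hne
        · rw [frob, he, csSup_empty] at hfU
          simp at hfU
          omega
        · have hbddU : BddAbove (gapSet U) := by
            refine ⟨n, fun x hx => ?_⟩
            by_contra hxn
            exact hx (hSU ((hmemS x).mpr (Or.inr (by show n < x; omega))))
          have hmem := Nat.sSup_mem hne hbddU
          rw [frob] at hfU
          rw [hfU] at hmem
          exact hmem hnUmem
      refine le_antisymm ?_ hSU
      intro x hxU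
      by_contra hxS
      have hxC : x ∉ C := fun h => hxS ((hmemS x).mpr h)
      have hxT : x ∉ T := fun h => hxC (Or.inl (Or.inl h))
      have hxB : x ∉ B := fun h => hxC (Or.inl (Or.inr h))
      have hxn : x ≤ n := by
        by_contra h
        exact hxC (Or.inr (by show n < x; omega))
      have hxne : x ≠ n := fun h => hnU (h ▸ hxU)
      have hx0 : x ≠ 0 := fun h => hxC (Or.inl (Or.inl (h ▸ T.zero_mem)))
      rcases lt_trichotomy (2 * x) n with hlt | heq | hgt
      · have hyC : n - x ∈ C := by
          by_cases hyT : n - x ∈ T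
          · exact Or.inl (Or.inl hyT)
          · refine Or.inl (Or.inr ⟨by omega, by omega, hyT, ?_⟩)
            have he : n - (n - x) = x := by omega
            rw [he]; exact hxT
        have hmem : x + (n - x) ∈ U := U.add_mem hxU (hSU ((hmemS _).mpr hyC))
        have he : x + (n - x) = n := by omega
        rw [he] at hmem
        exact hnU hmem
      · have hmem : x + x ∈ U := U.add_mem hxU hxU
        have he : x + x = n := by omega
        rw [he] at hmem
        exact hnU hmem
      · have hynT : n - x ∈ T := by
          by_contra hyT
          exact hxB ⟨by omega, by omega, hxT, hyT⟩
        have hmem : x + (n - x) ∈ U :=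
          U.add_mem hxU (hSU ((hmemS _).mpr (Or.inl (Or.inl hynT))))
        have he : x + (n - x) = n := by omega
        rw [he] at hmem
        exact hnU hmem
  refine ⟨{ carrier := C,
            add_mem' := fun {a b} ha hb => hadd a b ha hb,
            zero_mem' := Or.inl (Or.inl T.zero_mem) }, rfl, key _ rfl⟩
end

section
/- Let n ≥ 1 and j ≥ 2 be integers, and let A be a finite set of positive integers each of which lies strictly between n/(j+1) and n/j. Then A is precisely the set of minimal generators of the numerical semigroup ⟨A⟩, and n ∉ ⟨A⟩. -/
open Filter Topology
open scoped Classical BigOperators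

lemma closure_bound19 (n j : ℕ) (A : Set ℕ)
    (hbounds : ∀ a ∈ A, n < a * (j + 1) ∧ a * j < n) :
    ∀ s ∈ AddSubmonoid.closure A,
      s = 0 ∨ ∃ k, 1 ≤ k ∧ k * n < s * (j + 1) ∧ s * j < k * n := by
  intro s hs
  induction hs using AddSubmonoid.closure_induction with
  | mem a ha =>
      right
      exact ⟨1, le_refl 1, by simpa using (hbounds a ha).1, by simpa using (hbounds a ha).2⟩
  | zero => left; rfl
  | add x y hx hy ihx ihy =>
      rcases ihx with rfl | ⟨k1, hk1, h1, h2⟩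
      · simpa using ihy
      rcases ihy with rfl | ⟨k2, hk2, h3, h4⟩
      · right; exact ⟨k1, hk1, by simpa using h1, by simpa using h2⟩
      · right
        refine ⟨k1 + k2, by omega, ?_, ?_⟩ <;> nlinarith

lemma closure_decomp19 (A : Set ℕ) :
    ∀ s ∈ AddSubmonoid.closure A,
      s = 0 ∨ s ∈ A ∨ ∃ a ∈ AddSubmonoid.closure A, ∃ b ∈ AddSubmonoid.closure A,
        a ≠ 0 ∧ b ≠ 0 ∧ s = a + b := by
  intro s hs
  induction hs using AddSubmonoid.closure_induction with
  | mem a ha => exact Or.inr (Or.inl ha)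
  | zero => left; rfl
  | add x y hx hy ihx ihy =>
      rcases eq_or_ne x 0 with rfl | hx0
      · simpa using ihy
      rcases eq_or_ne y 0 with rfl | hy0
      · simpa using ihx
      · exact Or.inr (Or.inr ⟨x, hx, y, hy, hx0, hy0, rfl⟩)

theorem statement19 (n j : ℕ) (hn : 1 ≤ n) (hj : 2 ≤ j) (A : Set ℕ) (hA : A.Finite)
    (hbounds : ∀ a ∈ A, n < a * (j + 1) ∧ a * j < n) :
    minGens (AddSubmonoid.closure A) = A ∧ n ∉ AddSubmonoid.closure A := by
  have hbd := closure_bound19 n j A hbounds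
  constructor
  · ext s
    constructor
    · rintro ⟨hsS, hs0, hnd⟩
      rcases closure_decomp19 A s hsS with rfl | hsA | hdec
      · exact absurd rfl hs0
      · exact hsA
      · exact absurd hdec hnd
    · intro hsA
      refine ⟨AddSubmonoid.subset_closure hsA, ?_, ?_⟩
      · rintro rfl
        have := (hbounds 0 hsA).1
        omega
      · rintro ⟨a, ha, b, hb, ha0, hb0, rfl⟩
        rcases hbd a ha with rfl | ⟨k1, hk1, h1, h2⟩
        · exact ha0 rfl
        rcases hbd b hb with rfl | ⟨k2, hk2, h3, h4⟩
        · exact hb0 rfl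
        have h5 := (hbounds _ hsA).2
        nlinarith
  · intro hn
    rcases hbd n hn with rfl | ⟨k, hk, h1, h2⟩
    · omega
    · have hjk : j < k := lt_of_mul_lt_mul_right (by linarith [h2]) (Nat.zero_le n)
      have hkj : k < j + 1 := lt_of_mul_lt_mul_right (by linarith [h1]) (Nat.zero_le n)
      omega
end
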